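/- arXiv:2312.17466 — 5 statements merged into one kernel-verified Lean document; each statement's English description precedes it below -/
import Mathlib

section
/- Let a, b, c be real numbers with a ≠ 0, let h ∈ ℝ, and let γ be a closed curve at level h of H. Then for all integers i ≥ 4 and j ≥ 0 one has I_{i,j}(γ) = (1/(2a))·( −((i−3)/(j+2))·I_{i−4,j+2}(γ) + (2c(i−3)/(j+4))·I_{i−4,j+4}(γ) − I_{i−2,j}(γ) + ((i−j−3)·b/(j+2))·I_{i−2,j+2}(γ) ). -/
/-- The Hamiltonian H(x,y) = x² − y² + a·x⁴ + c·y⁴ + b·x²·y². -/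
noncomputable def Hfun (a b c x y : ℝ) : ℝ :=
  x ^ 2 - y ^ 2 + a * x ^ 4 + c * y ^ 4 + b * x ^ 2 * y ^ 2

/-- The line integral I_{i,j}(γ) = ∮_γ x^i y^j dx along a parametrized curve of period T. -/
noncomputable def lineInt (x y : ℝ → ℝ) (T : ℝ) (i j : ℕ) : ℝ :=
  ∫ t in (0:ℝ)..T, x t ^ i * y t ^ j * deriv x t

theorem stmt1 (a b c : ℝ) (ha : a ≠ 0) (h : ℝ)
    (x y : ℝ → ℝ) (T : ℝ) (hT : 0 < T)
    (hx : ContDiff ℝ 1 x) (hy : ContDiff ℝ 1 y)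
    (hper : ∀ t : ℝ, x (t + T) = x t ∧ y (t + T) = y t)
    (hlev : ∀ t : ℝ, Hfun a b c (x t) (y t) = h) :
    ∀ i j : ℕ, 4 ≤ i →
      lineInt x y T i j =
        (1 / (2 * a)) * (-(((i : ℝ) - 3) / ((j : ℝ) + 2)) * lineInt x y T (i - 4) (j + 2)
          + (2 * c * ((i : ℝ) - 3) / ((j : ℝ) + 4)) * lineInt x y T (i - 4) (j + 4)
          - lineInt x y T (i - 2) j
          + (((i : ℝ) - (j : ℝ) - 3) * b / ((j : ℝ) + 2)) * lineInt x y T (i - 2) (j + 2)) := by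
  have hxd : Differentiable ℝ x := hx.differentiable one_ne_zero
  have hyd : Differentiable ℝ y := hy.differentiable one_ne_zero
  have hxc : Continuous x := hx.continuous
  have hyc : Continuous y := hy.continuous
  have hx' : Continuous (deriv x) := hx.continuous_deriv le_rfl
  have hy' : Continuous (deriv y) := hy.continuous_deriv le_rfl
  -- integrability of monomial integrands
  have ix : ∀ p q : ℕ, IntervalIntegrable (fun t => x t ^ p * y t ^ q * deriv x t)
      MeasureTheory.volume 0 T := fun p q =>
    (((hxc.pow p).mul (hyc.pow q)).mul hx').intervalIntegrable 0 T
  have iy : ∀ p q : ℕ, IntervalIntegrable (fun t => x t ^ p * y t ^ q * deriv y t)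
      MeasureTheory.volume 0 T := fun p q =>
    (((hxc.pow p).mul (hyc.pow q)).mul hy').intervalIntegrable 0 T
  -- the "dy" integrals
  set K : ℕ → ℕ → ℝ := fun p q => ∫ t in (0:ℝ)..T, x t ^ p * y t ^ q * deriv y t with hK
  -- FTC + periodicity relation between dx and dy integrals
  have hKJ : ∀ p q : ℕ, ((p:ℝ)+1) * lineInt x y T p (q+1) + ((q:ℝ)+1) * K (p+1) q = 0 := by
    intro p q
    have hg : ∀ t : ℝ, HasDerivAt (fun t => x t ^ (p+1) * y t ^ (q+1))
        (((p:ℝ)+1) * (x t ^ p * y t ^ (q+1) * deriv x t)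
          + ((q:ℝ)+1) * (x t ^ (p+1) * y t ^ q * deriv y t)) t := by
      intro t
      have h1 := ((hxd t).hasDerivAt.pow (p+1)).mul ((hyd t).hasDerivAt.pow (q+1))
      refine (h1 : HasDerivAt (fun t => x t ^ (p+1) * y t ^ (q+1)) _ t).congr_deriv ?_
      simp [Nat.add_sub_cancel]
      ring
    have hi1 := (ix p (q+1)).const_mul ((p:ℝ)+1)
    have hi2 := (iy (p+1) q).const_mul ((q:ℝ)+1)
    have hftc : (∫ t in (0:ℝ)..T, (((p:ℝ)+1) * (x t ^ p * y t ^ (q+1) * deriv x t)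
          + ((q:ℝ)+1) * (x t ^ (p+1) * y t ^ q * deriv y t)))
        = x T ^ (p+1) * y T ^ (q+1) - x 0 ^ (p+1) * y 0 ^ (q+1) :=
      intervalIntegral.integral_eq_sub_of_hasDerivAt (fun t _ => hg t) (hi1.add hi2)
    have hperT : x T = x 0 ∧ y T = y 0 := by simpa using hper 0
    rw [intervalIntegral.integral_add hi1 hi2, intervalIntegral.integral_const_mul,
      intervalIntegral.integral_const_mul] at hftc
    rw [hperT.1, hperT.2] at hftc
    simpa [lineInt, hK] using hftc
  -- pointwise derivative of the level equation
  have hlevd : ∀ t : ℝ, 2 * x t * deriv x t - 2 * y t * deriv y t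
      + 4 * a * x t ^ 3 * deriv x t + 4 * c * y t ^ 3 * deriv y t
      + 2 * b * (x t * y t ^ 2 * deriv x t) + 2 * b * (x t ^ 2 * y t * deriv y t) = 0 := by
    intro t
    have hX := (hxd t).hasDerivAt
    have hY := (hyd t).hasDerivAt
    have hH : HasDerivAt (fun t => Hfun a b c (x t) (y t))
        (2 * x t * deriv x t - 2 * y t * deriv y t
        + 4 * a * x t ^ 3 * deriv x t + 4 * c * y t ^ 3 * deriv y t
        + 2 * b * (x t * y t ^ 2 * deriv x t) + 2 * b * (x t ^ 2 * y t * deriv y t)) t := by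
      have := ((((hX.pow 2).sub (hY.pow 2)).add ((hX.pow 4).const_mul a)).add
          ((hY.pow 4).const_mul c)).add ((((hX.pow 2).const_mul b).mul (hY.pow 2)))
      simp only [Hfun]
      refine (this : HasDerivAt (fun t => x t ^ 2 - y t ^ 2 + a * x t ^ 4 + c * y t ^ 4
        + b * x t ^ 2 * y t ^ 2) _ t).congr_deriv ?_
      push_cast
      simp only [Pi.pow_apply]
      ring
    have hconst : (fun t => Hfun a b c (x t) (y t)) = fun _ => h := funext hlev
    have h0 : HasDerivAt (fun t => Hfun a b c (x t) (y t)) 0 t := by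
      rw [hconst]; exact hasDerivAt_const t h
    exact hH.unique h0
  intro i j hi
  obtain ⟨m, rfl⟩ : ∃ m, i = m + 4 := ⟨i - 4, by omega⟩
  have e4 : m + 4 - 4 = m := by omega
  have e2 : m + 4 - 2 = m + 2 := by omega
  rw [e4, e2]
  -- main integral relation: multiply level derivative by x^{m+1} y^j and integrate
  have hA := (ix (m+2) j).const_mul 2
  have hB := (iy (m+1) (j+1)).const_mul 2
  have hC := (ix (m+4) j).const_mul (4*a)
  have hD := (iy (m+1) (j+3)).const_mul (4*c)
  have hE := (ix (m+2) (j+2)).const_mul (2*b)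
  have hFn := (iy (m+3) (j+1)).const_mul (2*b)
  have hzero : (∫ t in (0:ℝ)..T,
      (2 * (x t ^ (m+2) * y t ^ j * deriv x t)
        - 2 * (x t ^ (m+1) * y t ^ (j+1) * deriv y t)
        + 4*a * (x t ^ (m+4) * y t ^ j * deriv x t)
        + 4*c * (x t ^ (m+1) * y t ^ (j+3) * deriv y t)
        + 2*b * (x t ^ (m+2) * y t ^ (j+2) * deriv x t)
        + 2*b * (x t ^ (m+3) * y t ^ (j+1) * deriv y t))) = 0 := by
    have hfz : ∀ t : ℝ, (2 * (x t ^ (m+2) * y t ^ j * deriv x t)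
        - 2 * (x t ^ (m+1) * y t ^ (j+1) * deriv y t)
        + 4*a * (x t ^ (m+4) * y t ^ j * deriv x t)
        + 4*c * (x t ^ (m+1) * y t ^ (j+3) * deriv y t)
        + 2*b * (x t ^ (m+2) * y t ^ (j+2) * deriv x t)
        + 2*b * (x t ^ (m+3) * y t ^ (j+1) * deriv y t)) = 0 := by
      intro t
      have h0 := hlevd t
      have hexp : (2 * (x t ^ (m+2) * y t ^ j * deriv x t)
          - 2 * (x t ^ (m+1) * y t ^ (j+1) * deriv y t)
          + 4*a * (x t ^ (m+4) * y t ^ j * deriv x t)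
          + 4*c * (x t ^ (m+1) * y t ^ (j+3) * deriv y t)
          + 2*b * (x t ^ (m+2) * y t ^ (j+2) * deriv x t)
          + 2*b * (x t ^ (m+3) * y t ^ (j+1) * deriv y t))
          = x t ^ (m+1) * y t ^ j * (2 * x t * deriv x t - 2 * y t * deriv y t
            + 4 * a * x t ^ 3 * deriv x t + 4 * c * y t ^ 3 * deriv y t
            + 2 * b * (x t * y t ^ 2 * deriv x t) + 2 * b * (x t ^ 2 * y t * deriv y t)) := by
        ring
      rw [hexp, h0, mul_zero]
    simp only [hfz]
    simp
  rw [intervalIntegral.integral_add (((((hA.sub hB).add hC).add hD).add hE)) hFn,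
    intervalIntegral.integral_add ((((hA.sub hB).add hC).add hD)) hE,
    intervalIntegral.integral_add (((hA.sub hB).add hC)) hD,
    intervalIntegral.integral_add ((hA.sub hB)) hC,
    intervalIntegral.integral_sub hA hB] at hzero
  simp only [intervalIntegral.integral_const_mul] at hzero
  -- rewrite in terms of lineInt and K
  have hrel : 2 * lineInt x y T (m+2) j - 2 * K (m+1) (j+1)
      + 4*a * lineInt x y T (m+4) j + 4*c * K (m+1) (j+3)
      + 2*b * lineInt x y T (m+2) (j+2) + 2*b * K (m+3) (j+1) = 0 := by
    simpa [lineInt, hK] using hzero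
  have h1 := hKJ m (j+1)
  have h3 := hKJ m (j+3)
  have h5 := hKJ (m+2) (j+1)
  rw [show m + 2 + 1 = m + 3 from by omega] at h5
  have ej1 : j + 1 + 1 = j + 2 := by omega
  have ej3 : j + 3 + 1 = j + 4 := by omega
  rw [ej1] at h1 h5
  rw [ej3] at h3
  push_cast at h1 h3 h5 ⊢
  have hj2 : (j:ℝ) + 2 ≠ 0 := by positivity
  have hj4 : (j:ℝ) + 4 ≠ 0 := by positivity
  have hmain : 4*a*(((j:ℝ)+2)*((j:ℝ)+4)) * lineInt x y T (m+4) j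
      = -2*(((j:ℝ)+2)*((j:ℝ)+4)) * lineInt x y T (m+2) j
        - 2*((j:ℝ)+4)*((m:ℝ)+1) * lineInt x y T m (j+2)
        + 4*c*((j:ℝ)+2)*((m:ℝ)+1) * lineInt x y T m (j+4)
        + 2*b*((j:ℝ)+4)*(((m:ℝ)+3) - ((j:ℝ)+2)) * lineInt x y T (m+2) (j+2) := by
    linear_combination ((((j:ℝ)+2)*((j:ℝ)+4))) * hrel + (2*((j:ℝ)+4)) * h1
      + (-4*c*((j:ℝ)+2)) * h3 + (-2*b*((j:ℝ)+4)) * h5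
  have h4 : (4*a*(((j:ℝ)+2)*((j:ℝ)+4))) ≠ 0 := by
    refine mul_ne_zero (mul_ne_zero (by norm_num) ha) (mul_ne_zero hj2 hj4)
  have hJ44 : lineInt x y T (m+4) j
      = (-2*(((j:ℝ)+2)*((j:ℝ)+4)) * lineInt x y T (m+2) j
        - 2*((j:ℝ)+4)*((m:ℝ)+1) * lineInt x y T m (j+2)
        + 4*c*((j:ℝ)+2)*((m:ℝ)+1) * lineInt x y T m (j+4)
        + 2*b*((j:ℝ)+4)*(((m:ℝ)+3) - ((j:ℝ)+2)) * lineInt x y T (m+2) (j+2))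
        / (4*a*(((j:ℝ)+2)*((j:ℝ)+4))) := by
    rw [eq_div_iff h4]
    linear_combination hmain
  rw [hJ44]
  field_simp
  ring
end

section
/- Let a, b, c be real numbers with c ≠ 0, let h ∈ ℝ, and let γ be a closed curve at level h of H. Then for all integers i ≥ 0 and j ≥ 4 one has I_{i,j}(γ) = (j/(2c(i+j+1)))·( 2h·I_{i,j−4}(γ) − I_{i+2,j−4}(γ) + ((i+2j−3)/(j−2))·I_{i,j−2}(γ) − ((i+j+1)·b/(j−2))·I_{i+2,j−2}(γ) ). -/
open MeasureTheory

lemma intzero {T : ℝ} {f : ℝ → ℝ} (hf : ∀ t, f t = 0) : (∫ t in (0:ℝ)..T, f t) = 0 := by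
  simp [funext hf]

lemma lin6 {T : ℝ} {f1 f2 f3 f4 f5 f6 : ℝ → ℝ} (c1 c2 c3 c4 c5 c6 : ℝ)
    (h1 : Continuous f1) (h2 : Continuous f2) (h3 : Continuous f3)
    (h4 : Continuous f4) (h5 : Continuous f5) (h6 : Continuous f6) :
    (∫ t in (0:ℝ)..T, (c1 * f1 t + c2 * f2 t + c3 * f3 t + c4 * f4 t + c5 * f5 t + c6 * f6 t)) =
      c1 * (∫ t in (0:ℝ)..T, f1 t) + c2 * (∫ t in (0:ℝ)..T, f2 t) + c3 * (∫ t in (0:ℝ)..T, f3 t) +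
      c4 * (∫ t in (0:ℝ)..T, f4 t) + c5 * (∫ t in (0:ℝ)..T, f5 t) +
      c6 * (∫ t in (0:ℝ)..T, f6 t) := by
  have i1 : IntervalIntegrable (fun t => c1 * f1 t) volume 0 T :=
    (continuous_const.mul h1).intervalIntegrable 0 T
  have i2 : IntervalIntegrable (fun t => c2 * f2 t) volume 0 T :=
    (continuous_const.mul h2).intervalIntegrable 0 T
  have i3 : IntervalIntegrable (fun t => c3 * f3 t) volume 0 T :=
    (continuous_const.mul h3).intervalIntegrable 0 T
  have i4 : IntervalIntegrable (fun t => c4 * f4 t) volume 0 T :=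
    (continuous_const.mul h4).intervalIntegrable 0 T
  have i5 : IntervalIntegrable (fun t => c5 * f5 t) volume 0 T :=
    (continuous_const.mul h5).intervalIntegrable 0 T
  have i6 : IntervalIntegrable (fun t => c6 * f6 t) volume 0 T :=
    (continuous_const.mul h6).intervalIntegrable 0 T
  rw [intervalIntegral.integral_add ((((i1.add i2).add i3).add i4).add i5) i6,
      intervalIntegral.integral_add (((i1.add i2).add i3).add i4) i5,
      intervalIntegral.integral_add ((i1.add i2).add i3) i4,
      intervalIntegral.integral_add (i1.add i2) i3,
      intervalIntegral.integral_add i1 i2,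
      intervalIntegral.integral_const_mul, intervalIntegral.integral_const_mul,
      intervalIntegral.integral_const_mul, intervalIntegral.integral_const_mul,
      intervalIntegral.integral_const_mul, intervalIntegral.integral_const_mul]

theorem stmt2 (a b c : ℝ) (hc : c ≠ 0) (h : ℝ)
    (x y : ℝ → ℝ) (T : ℝ) (hT : 0 < T)
    (hx : ContDiff ℝ 1 x) (hy : ContDiff ℝ 1 y)
    (hper : ∀ t : ℝ, x (t + T) = x t ∧ y (t + T) = y t)
    (hlev : ∀ t : ℝ, Hfun a b c (x t) (y t) = h) :
    ∀ i j : ℕ, 4 ≤ j →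
      lineInt x y T i j =
        ((j : ℝ) / (2 * c * ((i : ℝ) + (j : ℝ) + 1))) *
          (2 * h * lineInt x y T i (j - 4) - lineInt x y T (i + 2) (j - 4)
            + (((i : ℝ) + 2 * (j : ℝ) - 3) / ((j : ℝ) - 2)) * lineInt x y T i (j - 2)
            - (((i : ℝ) + (j : ℝ) + 1) * b / ((j : ℝ) - 2)) * lineInt x y T (i + 2) (j - 2)) := by
  have hx' : ∀ t, HasDerivAt x (deriv x t) t := fun t =>
    ((hx.differentiable one_ne_zero) t).hasDerivAt
  have hy' : ∀ t, HasDerivAt y (deriv y t) t := fun t =>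
    ((hy.differentiable one_ne_zero) t).hasDerivAt
  have hcx : Continuous x := hx.continuous
  have hcy : Continuous y := hy.continuous
  have hcx' : Continuous (deriv x) := hx.continuous_deriv le_rfl
  have hcy' : Continuous (deriv y) := hy.continuous_deriv le_rfl
  -- derivative of H along the curve vanishes
  have hE : ∀ t, (2 * x t + 4 * a * x t ^ 3 + 2 * b * x t * y t ^ 2) * deriv x t
      + (-2 * y t + 4 * c * y t ^ 3 + 2 * b * x t ^ 2 * y t) * deriv y t = 0 := by
    intro t
    have hH : HasDerivAt (fun t => Hfun a b c (x t) (y t))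
        ((2 * x t + 4 * a * x t ^ 3 + 2 * b * x t * y t ^ 2) * deriv x t
          + (-2 * y t + 4 * c * y t ^ 3 + 2 * b * x t ^ 2 * y t) * deriv y t) t := by
      have hd := ((((((hx' t).pow 2).sub ((hy' t).pow 2)).add
          (((hx' t).pow 4).const_mul a)).add (((hy' t).pow 4).const_mul c)).add
          ((((hx' t).pow 2).const_mul b).mul ((hy' t).pow 2)))
      simp only [Hfun]
      refine (hd.congr_deriv ?_).congr_of_eventuallyEq (Filter.Eventually.of_forall fun s => ?_)
      · push_cast [Pi.pow_apply]
        ring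
      · rfl
    have h0 : HasDerivAt (fun t => Hfun a b c (x t) (y t)) 0 t := by
      have hcst : (fun t => Hfun a b c (x t) (y t)) = fun _ => h := funext hlev
      rw [hcst]
      exact hasDerivAt_const t h
    exact hH.unique h0
  -- closure relation
  have hL1 : ∀ m n : ℕ, ((m : ℝ) + 1) * (∫ t in (0:ℝ)..T, x t ^ m * y t ^ (n + 1) * deriv x t)
      + ((n : ℝ) + 1) * (∫ t in (0:ℝ)..T, x t ^ (m + 1) * y t ^ n * deriv y t) = 0 := by
    intro m n
    have hF : ∀ t ∈ Set.uIcc (0:ℝ) T, HasDerivAt (fun t => x t ^ (m + 1) * y t ^ (n + 1))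
        (((m : ℝ) + 1) * (x t ^ m * y t ^ (n + 1) * deriv x t)
          + ((n : ℝ) + 1) * (x t ^ (m + 1) * y t ^ n * deriv y t)) t := by
      intro t _
      have hd := ((hx' t).pow (m + 1)).mul ((hy' t).pow (n + 1))
      refine (hd.congr_deriv ?_).congr_of_eventuallyEq (Filter.Eventually.of_forall fun s => ?_)
      · simp only [Nat.add_sub_cancel]
        push_cast [Pi.pow_apply]
        ring
      · rfl
    have i1 : IntervalIntegrable (fun t => ((m : ℝ) + 1) * (x t ^ m * y t ^ (n + 1) * deriv x t))
        volume 0 T :=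
      (continuous_const.mul (((hcx.pow m).mul (hcy.pow (n + 1))).mul hcx')).intervalIntegrable 0 T
    have i2 : IntervalIntegrable (fun t => ((n : ℝ) + 1) * (x t ^ (m + 1) * y t ^ n * deriv y t))
        volume 0 T :=
      (continuous_const.mul (((hcx.pow (m + 1)).mul (hcy.pow n)).mul hcy')).intervalIntegrable 0 T
    have key := intervalIntegral.integral_eq_sub_of_hasDerivAt hF (i1.add i2)
    rw [intervalIntegral.integral_add i1 i2, intervalIntegral.integral_const_mul,
        intervalIntegral.integral_const_mul] at key
    have hper0 := hper 0
    rw [zero_add] at hper0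
    rw [hper0.1, hper0.2, sub_self] at key
    exact key
  intro i j hj
  obtain ⟨k, rfl⟩ : ∃ k, j = k + 4 := ⟨j - 4, by omega⟩
  have e4 : k + 4 - 4 = k := by omega
  have e2 : k + 4 - 2 = k + 2 := by omega
  rw [e4, e2]
  simp only [lineInt]
  set I0 := ∫ t in (0:ℝ)..T, x t ^ i * y t ^ k * deriv x t with hI0
  set I2 := ∫ t in (0:ℝ)..T, x t ^ (i + 2) * y t ^ k * deriv x t with hI2
  set I4 := ∫ t in (0:ℝ)..T, x t ^ (i + 4) * y t ^ k * deriv x t with hI4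
  set I02 := ∫ t in (0:ℝ)..T, x t ^ i * y t ^ (k + 2) * deriv x t with hI02
  set I22 := ∫ t in (0:ℝ)..T, x t ^ (i + 2) * y t ^ (k + 2) * deriv x t with hI22
  set I04 := ∫ t in (0:ℝ)..T, x t ^ i * y t ^ (k + 4) * deriv x t with hI04
  set J1 := ∫ t in (0:ℝ)..T, x t ^ (i + 1) * y t ^ (k + 1) * deriv y t with hJ1
  set J3 := ∫ t in (0:ℝ)..T, x t ^ (i + 1) * y t ^ (k + 3) * deriv y t with hJ3
  set J13 := ∫ t in (0:ℝ)..T, x t ^ (i + 3) * y t ^ (k + 1) * deriv y t with hJ13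
  have cI : ∀ m n : ℕ, Continuous (fun t => x t ^ m * y t ^ n * deriv x t) :=
    fun m n => ((hcx.pow m).mul (hcy.pow n)).mul hcx'
  have cJ : ∀ m n : ℕ, Continuous (fun t => x t ^ m * y t ^ n * deriv y t) :=
    fun m n => ((hcx.pow m).mul (hcy.pow n)).mul hcy'
  -- relation A: level set
  have eA : 1 * I2 + (-1) * I02 + a * I4 + c * I04 + b * I22 + (-h) * I0 = 0 := by
    rw [hI2, hI02, hI4, hI04, hI22, hI0]
    rw [← lin6 1 (-1) a c b (-h) (cI (i+2) k) (cI i (k+2)) (cI (i+4) k) (cI i (k+4))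
        (cI (i+2) (k+2)) (cI i k)]
    refine intzero fun t => ?_
    have hl := hlev t
    simp only [Hfun] at hl
    linear_combination (x t ^ i * y t ^ k * deriv x t) * hl
  -- relation B: dH = 0 multiplied by x^{i+1} y^k
  have eB : 2 * I2 + (4 * a) * I4 + (2 * b) * I22 + (-2) * J1 + (4 * c) * J3
      + (2 * b) * J13 = 0 := by
    rw [hI2, hI4, hI22, hJ1, hJ3, hJ13]
    rw [← lin6 2 (4*a) (2*b) (-2) (4*c) (2*b) (cI (i+2) k) (cI (i+4) k) (cI (i+2) (k+2))
        (cJ (i+1) (k+1)) (cJ (i+1) (k+3)) (cJ (i+3) (k+1))]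
    refine intzero fun t => ?_
    linear_combination (x t ^ (i + 1) * y t ^ k) * hE t
  have f1 := hL1 i (k + 1)
  have f2 := hL1 i (k + 3)
  have f3 := hL1 (i + 2) (k + 1)
  rw [show k + 1 + 1 = k + 2 from rfl] at f1
  rw [show k + 3 + 1 = k + 4 from rfl] at f2
  rw [show i + 2 + 1 = i + 3 from rfl, show k + 1 + 1 = k + 2 from rfl] at f3
  rw [← hI02, ← hJ1] at f1
  rw [← hI04, ← hJ3] at f2
  rw [← hI22, ← hJ13] at f3
  push_cast at f1 f2 f3 ⊢
  have hck2 : (k : ℝ) + 2 ≠ 0 := by positivity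
  have hck4 : (k : ℝ) + 4 ≠ 0 := by positivity
  have h5 : (i : ℝ) + ((k : ℝ) + 4) + 1 ≠ 0 := by positivity
  have hkey : 2 * c * ((i:ℝ) + (k:ℝ) + 5) * ((k:ℝ) + 2) * I04
      = 2 * h * ((k:ℝ) + 2) * ((k:ℝ) + 4) * I0 - ((k:ℝ) + 2) * ((k:ℝ) + 4) * I2
        + ((k:ℝ) + 4) * ((i:ℝ) + 2 * (k:ℝ) + 5) * I02
        - b * ((k:ℝ) + 4) * ((i:ℝ) + (k:ℝ) + 5) * I22 := by
    linear_combination (2 * ((k:ℝ)+2) * ((k:ℝ)+4)) * eA - (((k:ℝ)+2) * ((k:ℝ)+4) / 2) * eB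
      - ((k:ℝ)+4) * f1 + (2 * c * ((k:ℝ)+2)) * f2 + b * ((k:ℝ)+4) * f3
  rw [show ((k:ℝ) + 4 - 2) = (k:ℝ) + 2 from by ring,
      show ((i:ℝ) + ((k:ℝ) + 4) + 1) = (i:ℝ) + (k:ℝ) + 5 from by ring,
      show ((i:ℝ) + 2 * ((k:ℝ) + 4) - 3) = (i:ℝ) + 2 * (k:ℝ) + 5 from by ring]
  have h5' : (i:ℝ) + (k:ℝ) + 5 ≠ 0 := by positivity
  field_simp
  linear_combination hkey
end

section
/- Let a, b, c be real numbers with a ≠ 0, let h ∈ ℝ, and let γ be a closed curve at level h of H. Then for all integers i ≥ 4 and j ≥ 0 one has I_{i,j}(γ) = (1/(2a(i+j+1)))·( 2(i−3)h·I_{i−4,j}(γ) − (2i+j−2)·I_{i−2,j}(γ) + (j(i−3)/(j+2))·I_{i−4,j+2}(γ) − ((i+j+1)·j·b/(j+2))·I_{i−2,j+2}(γ) ). -/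
/-- The companion line integral ∮_γ x^i y^j dy. -/
noncomputable def lineIntY (x y : ℝ → ℝ) (T : ℝ) (i j : ℕ) : ℝ :=
  ∫ t in (0:ℝ)..T, x t ^ i * y t ^ j * deriv y t

open intervalIntegral MeasureTheory

lemma aux_ibp (x y : ℝ → ℝ) (T : ℝ) (hx : ContDiff ℝ 1 x) (hy : ContDiff ℝ 1 y)
    (hper : ∀ t : ℝ, x (t + T) = x t ∧ y (t + T) = y t) (p q : ℕ) :
    ((p:ℝ)+1) * lineInt x y T p (q+1) + ((q:ℝ)+1) * lineIntY x y T (p+1) q = 0 := by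
  have hxc : Continuous x := hx.continuous
  have hyc : Continuous y := hy.continuous
  have hdx : Continuous (deriv x) := hx.continuous_deriv le_rfl
  have hdy : Continuous (deriv y) := hy.continuous_deriv le_rfl
  have hint1 : IntervalIntegrable (fun t => x t ^ p * y t ^ (q+1) * deriv x t) volume 0 T := by
    apply Continuous.intervalIntegrable; fun_prop
  have hint2 : IntervalIntegrable (fun t => x t ^ (p+1) * y t ^ q * deriv y t) volume 0 T := by
    apply Continuous.intervalIntegrable; fun_prop
  have key : ∫ t in (0:ℝ)..T,
      (((p:ℝ)+1) * (x t ^ p * y t ^ (q+1) * deriv x t)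
        + ((q:ℝ)+1) * (x t ^ (p+1) * y t ^ q * deriv y t)) = 0 := by
    have hd : ∀ t ∈ Set.uIcc (0:ℝ) T, HasDerivAt (fun s => x s ^ (p+1) * y s ^ (q+1))
        (((p:ℝ)+1) * (x t ^ p * y t ^ (q+1) * deriv x t)
          + ((q:ℝ)+1) * (x t ^ (p+1) * y t ^ q * deriv y t)) t := by
      intro t _
      have hx' : HasDerivAt x (deriv x t) t := ((hx.differentiable one_ne_zero) t).hasDerivAt
      have hy' : HasDerivAt y (deriv y t) t := ((hy.differentiable one_ne_zero) t).hasDerivAt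
      have := (hx'.fun_pow (p+1)).fun_mul (hy'.fun_pow (q+1))
      refine this.congr_deriv ?_
      push_cast [Nat.add_sub_cancel]
      ring
    have hFc : Continuous (fun t => ((p:ℝ)+1) * (x t ^ p * y t ^ (q+1) * deriv x t)
        + ((q:ℝ)+1) * (x t ^ (p+1) * y t ^ q * deriv y t)) := by fun_prop
    rw [integral_eq_sub_of_hasDerivAt hd (hFc.intervalIntegrable 0 T)]
    have e1 : x T = x 0 := by simpa using (hper 0).1
    have e2 : y T = y 0 := by simpa using (hper 0).2
    rw [e1, e2]; ring
  calc ((p:ℝ)+1) * lineInt x y T p (q+1) + ((q:ℝ)+1) * lineIntY x y T (p+1) q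
      = ∫ t in (0:ℝ)..T, (((p:ℝ)+1) * (x t ^ p * y t ^ (q+1) * deriv x t)
          + ((q:ℝ)+1) * (x t ^ (p+1) * y t ^ q * deriv y t)) := by
        rw [lineInt, lineIntY, ← intervalIntegral.integral_const_mul, ← intervalIntegral.integral_const_mul,
          ← intervalIntegral.integral_add (hint1.const_mul _) (hint2.const_mul _)]
    _ = 0 := key

lemma aux_star (a b c h : ℝ) (x y : ℝ → ℝ) (T : ℝ) (hx : ContDiff ℝ 1 x) (hy : ContDiff ℝ 1 y)
    (hlev : ∀ t : ℝ, Hfun a b c (x t) (y t) = h) (p q : ℕ) :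
    lineInt x y T (p+2) q - lineInt x y T p (q+2) + a * lineInt x y T (p+4) q
      + c * lineInt x y T p (q+4) + b * lineInt x y T (p+2) (q+2) = h * lineInt x y T p q := by
  have hxc : Continuous x := hx.continuous
  have hyc : Continuous y := hy.continuous
  have hdx : Continuous (deriv x) := hx.continuous_deriv le_rfl
  have hint : ∀ m n : ℕ, IntervalIntegrable (fun t => x t ^ m * y t ^ n * deriv x t) volume 0 T :=
    fun m n => by apply Continuous.intervalIntegrable; fun_prop
  calc lineInt x y T (p+2) q - lineInt x y T p (q+2) + a * lineInt x y T (p+4) q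
      + c * lineInt x y T p (q+4) + b * lineInt x y T (p+2) (q+2)
      = ∫ t in (0:ℝ)..T,
          (x t ^ (p+2) * y t ^ q * deriv x t - x t ^ p * y t ^ (q+2) * deriv x t
            + a * (x t ^ (p+4) * y t ^ q * deriv x t)
            + c * (x t ^ p * y t ^ (q+4) * deriv x t)
            + b * (x t ^ (p+2) * y t ^ (q+2) * deriv x t)) := by
        simp only [lineInt, ← intervalIntegral.integral_const_mul]
        rw [← intervalIntegral.integral_sub (hint _ _) (hint _ _),
          ← intervalIntegral.integral_add ((hint _ _).sub (hint _ _)) ((hint _ _).const_mul a),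
          ← intervalIntegral.integral_add (((hint _ _).sub (hint _ _)).add ((hint _ _).const_mul a))
            ((hint _ _).const_mul c),
          ← intervalIntegral.integral_add ((((hint _ _).sub (hint _ _)).add
            ((hint _ _).const_mul a)).add ((hint _ _).const_mul c)) ((hint _ _).const_mul b)]
    _ = ∫ t in (0:ℝ)..T, h * (x t ^ p * y t ^ q * deriv x t) := by
        refine integral_congr fun t _ => ?_
        have hl := hlev t
        simp only [Hfun] at hl
        linear_combination (x t ^ p * y t ^ q * deriv x t) * hl
    _ = h * lineInt x y T p q := by rw [lineInt, intervalIntegral.integral_const_mul]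

lemma aux_D (a b c h : ℝ) (x y : ℝ → ℝ) (T : ℝ) (hx : ContDiff ℝ 1 x) (hy : ContDiff ℝ 1 y)
    (hlev : ∀ t : ℝ, Hfun a b c (x t) (y t) = h) (p q : ℕ) :
    2 * lineInt x y T (p+1) q + 4 * a * lineInt x y T (p+3) q + 2 * b * lineInt x y T (p+1) (q+2)
      - 2 * lineIntY x y T p (q+1) + 4 * c * lineIntY x y T p (q+3)
      + 2 * b * lineIntY x y T (p+2) (q+1) = 0 := by
  have hxc : Continuous x := hx.continuous
  have hyc : Continuous y := hy.continuous
  have hdx : Continuous (deriv x) := hx.continuous_deriv le_rfl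
  have hdy : Continuous (deriv y) := hy.continuous_deriv le_rfl
  have hintx : ∀ m n : ℕ, IntervalIntegrable (fun t => x t ^ m * y t ^ n * deriv x t) volume 0 T :=
    fun m n => by apply Continuous.intervalIntegrable; fun_prop
  have hinty : ∀ m n : ℕ, IntervalIntegrable (fun t => x t ^ m * y t ^ n * deriv y t) volume 0 T :=
    fun m n => by apply Continuous.intervalIntegrable; fun_prop
  have hchain : ∀ t : ℝ, (2 * x t + 4 * a * x t ^ 3 + 2 * b * x t * y t ^ 2) * deriv x t
      + (-(2 * y t) + 4 * c * y t ^ 3 + 2 * b * x t ^ 2 * y t) * deriv y t = 0 := by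
    intro t
    have hx' : HasDerivAt x (deriv x t) t := ((hx.differentiable one_ne_zero) t).hasDerivAt
    have hy' : HasDerivAt y (deriv y t) t := ((hy.differentiable one_ne_zero) t).hasDerivAt
    have h1 : HasDerivAt (fun s => x s ^ 2 - y s ^ 2 + a * x s ^ 4 + c * y s ^ 4
        + b * (x s ^ 2 * y s ^ 2))
        ((2 * x t + 4 * a * x t ^ 3 + 2 * b * x t * y t ^ 2) * deriv x t
          + (-(2 * y t) + 4 * c * y t ^ 3 + 2 * b * x t ^ 2 * y t) * deriv y t) t := by
      have := ((((hx'.fun_pow 2).fun_sub (hy'.fun_pow 2)).fun_add ((hx'.fun_pow 4).const_mul a)).fun_add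
        ((hy'.fun_pow 4).const_mul c)).fun_add (((hx'.fun_pow 2).fun_mul (hy'.fun_pow 2)).const_mul b)
      refine this.congr_deriv ?_
      norm_num
      ring
    have h2 : HasDerivAt (fun s => x s ^ 2 - y s ^ 2 + a * x s ^ 4 + c * y s ^ 4
        + b * (x s ^ 2 * y s ^ 2)) 0 t := by
      have he : (fun s => x s ^ 2 - y s ^ 2 + a * x s ^ 4 + c * y s ^ 4 + b * (x s ^ 2 * y s ^ 2))
          = fun _ => h := funext fun s => by simpa [Hfun, mul_assoc] using hlev s
      rw [he]; exact hasDerivAt_const t h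
    exact h1.unique h2
  calc 2 * lineInt x y T (p+1) q + 4 * a * lineInt x y T (p+3) q
      + 2 * b * lineInt x y T (p+1) (q+2) - 2 * lineIntY x y T p (q+1)
      + 4 * c * lineIntY x y T p (q+3) + 2 * b * lineIntY x y T (p+2) (q+1)
      = ∫ t in (0:ℝ)..T,
          (2 * (x t ^ (p+1) * y t ^ q * deriv x t) + 4 * a * (x t ^ (p+3) * y t ^ q * deriv x t)
            + 2 * b * (x t ^ (p+1) * y t ^ (q+2) * deriv x t)
            - 2 * (x t ^ p * y t ^ (q+1) * deriv y t)
            + 4 * c * (x t ^ p * y t ^ (q+3) * deriv y t)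
            + 2 * b * (x t ^ (p+2) * y t ^ (q+1) * deriv y t)) := by
        simp only [lineInt, lineIntY, ← intervalIntegral.integral_const_mul]
        rw [← intervalIntegral.integral_add ((hintx _ _).const_mul _) ((hintx _ _).const_mul _),
          ← intervalIntegral.integral_add (IntervalIntegrable.add ((hintx _ _).const_mul _)
            ((hintx _ _).const_mul _)) ((hintx _ _).const_mul _),
          ← intervalIntegral.integral_sub (IntervalIntegrable.add (IntervalIntegrable.add
            ((hintx _ _).const_mul _) ((hintx _ _).const_mul _)) ((hintx _ _).const_mul _))
            ((hinty _ _).const_mul _),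
          ← intervalIntegral.integral_add (IntervalIntegrable.sub (IntervalIntegrable.add
            (IntervalIntegrable.add ((hintx _ _).const_mul _) ((hintx _ _).const_mul _))
            ((hintx _ _).const_mul _)) ((hinty _ _).const_mul _)) ((hinty _ _).const_mul _),
          ← intervalIntegral.integral_add (IntervalIntegrable.add (IntervalIntegrable.sub
            (IntervalIntegrable.add (IntervalIntegrable.add ((hintx _ _).const_mul _)
            ((hintx _ _).const_mul _)) ((hintx _ _).const_mul _)) ((hinty _ _).const_mul _))
            ((hinty _ _).const_mul _)) ((hinty _ _).const_mul _)]
    _ = ∫ t in (0:ℝ)..T, (0:ℝ) := by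
        refine integral_congr fun t _ => ?_
        linear_combination (x t ^ p * y t ^ q) * hchain t
    _ = 0 := integral_zero

theorem stmt3 (a b c : ℝ) (ha : a ≠ 0) (h : ℝ)
    (x y : ℝ → ℝ) (T : ℝ) (hT : 0 < T)
    (hx : ContDiff ℝ 1 x) (hy : ContDiff ℝ 1 y)
    (hper : ∀ t : ℝ, x (t + T) = x t ∧ y (t + T) = y t)
    (hlev : ∀ t : ℝ, Hfun a b c (x t) (y t) = h) :
    ∀ i j : ℕ, 4 ≤ i →
      lineInt x y T i j =
        (1 / (2 * a * ((i : ℝ) + (j : ℝ) + 1))) *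
          (2 * ((i : ℝ) - 3) * h * lineInt x y T (i - 4) j
            - (2 * (i : ℝ) + (j : ℝ) - 2) * lineInt x y T (i - 2) j
            + ((j : ℝ) * ((i : ℝ) - 3) / ((j : ℝ) + 2)) * lineInt x y T (i - 4) (j + 2)
            - (((i : ℝ) + (j : ℝ) + 1) * (j : ℝ) * b / ((j : ℝ) + 2)) * lineInt x y T (i - 2) (j + 2)) := by
  intro i j hi
  obtain ⟨k, rfl⟩ : ∃ k, i = k + 4 := ⟨i - 4, by omega⟩
  have e4 : k + 4 - 4 = k := by omega
  have e2 : k + 4 - 2 = k + 2 := by omega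
  rw [e4, e2]
  have hstar := aux_star a b c h x y T hx hy hlev k j
  have hD := aux_D a b c h x y T hx hy hlev (k+1) j
  have hE1 := aux_ibp x y T hx hy hper k (j+1)
  have hE2 := aux_ibp x y T hx hy hper k (j+3)
  have hE3 := aux_ibp x y T hx hy hper (k+2) (j+1)
  push_cast at hstar hD hE1 hE2 hE3 ⊢
  have hj2 : (j:ℝ) + 2 ≠ 0 := by positivity
  have hden : 2 * a * ((k:ℝ) + 4 + (j:ℝ) + 1) ≠ 0 := by
    refine mul_ne_zero (mul_ne_zero two_ne_zero ha) ?_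
    positivity
  have key : 2 * a * ((k:ℝ) + (j:ℝ) + 5) * ((j:ℝ) + 2) * lineInt x y T (k+4) j
      = 2 * ((k:ℝ) + 1) * h * ((j:ℝ) + 2) * lineInt x y T k j
        - (2 * ((k:ℝ) + 4) + (j:ℝ) - 2) * ((j:ℝ) + 2) * lineInt x y T (k+2) j
        + (j:ℝ) * ((k:ℝ) + 1) * lineInt x y T k (j+2)
        - ((k:ℝ) + (j:ℝ) + 5) * (j:ℝ) * b * lineInt x y T (k+2) (j+2) := by
    linear_combination (2 * ((k:ℝ) + 1) * ((j:ℝ) + 2)) * hstar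
      + (((j:ℝ) + 2) * ((j:ℝ) + 4) / 2) * hD + (((j:ℝ) + 4)) * hE1
      + (-2 * c * ((j:ℝ) + 2)) * hE2 + (-b * ((j:ℝ) + 4)) * hE3
  field_simp
  linear_combination key
end

section
/- (Lemma 2.1, eq. (2.1)) Let a, b, c be real numbers with a·c·(b²−4ac) ≠ 0, and let i, j ≥ 0 be integers such that n := i + j is odd and n ≥ 5. Then there exist real polynomials f̄₁, f̄₂, f̄₃, f̄₄, f̄₅ with deg f̄₁ ≤ ⌊(n−1)/4⌋, deg f̄₂ ≤ ⌊(n−3)/4⌋, deg f̄₃ ≤ ⌊(n−3)/4⌋, deg f̄₅ ≤ ⌊(n−3)/4⌋, and deg f̄₄ ≤ ⌊(n−1)/4⌋ − 1, such that for every h ∈ ℝ and every closed curve γ at level h of H: I_{i,j}(γ) = f̄₁(h)·I_{0,1}(γ) + f̄₂(h)·I_{0,3}(γ) + f̄₃(h)·I_{2,1}(γ) + f̄₄(h)·I_{2,3}(γ) + f̄₅(h)·I_{1,2}(γ). -/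
noncomputable def kInt (x y : ℝ → ℝ) (T : ℝ) (i j : ℕ) : ℝ :=
  ∫ t in (0:ℝ)..T, x t ^ i * y t ^ j * deriv y t

section Curve
variable {a b c h : ℝ} {x y : ℝ → ℝ} {T : ℝ}

lemma L1gen (hx : ContDiff ℝ 1 x) (hy : ContDiff ℝ 1 y)
    (hper : ∀ t : ℝ, x (t + T) = x t ∧ y (t + T) = y t) (p q : ℕ) :
    (p:ℝ) * lineInt x y T (p-1) (q+1) + ((q:ℝ)+1) * kInt x y T p q = 0 := by
  have hcx : Continuous x := hx.continuous
  have hcy : Continuous y := hy.continuous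
  have hcdx : Continuous (deriv x) := hx.continuous_deriv le_rfl
  have hcdy : Continuous (deriv y) := hy.continuous_deriv le_rfl
  have hder : ∀ t ∈ Set.uIcc (0:ℝ) T, HasDerivAt (fun s => x s ^ p * y s ^ (q+1))
      ((p:ℝ) * x t ^ (p-1) * deriv x t * y t ^ (q+1)
        + x t ^ p * (((q:ℝ)+1) * y t ^ q * deriv y t)) t := by
    intro t _
    have h1 := (((hx.differentiable one_ne_zero t).hasDerivAt).fun_pow p).mul
      (((hy.differentiable one_ne_zero t).hasDerivAt).fun_pow (q+1))
    refine h1.congr_deriv ?_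
    simp only [Nat.add_sub_cancel]
    push_cast
    ring
  have hint : IntervalIntegrable (fun t => (p:ℝ) * x t ^ (p-1) * deriv x t * y t ^ (q+1)
        + x t ^ p * (((q:ℝ)+1) * y t ^ q * deriv y t)) MeasureTheory.volume 0 T := by
    apply Continuous.intervalIntegrable
    fun_prop
  have h0 := intervalIntegral.integral_eq_sub_of_hasDerivAt hder hint
  have hxT : x T = x 0 := by simpa using (hper 0).1
  have hyT : y T = y 0 := by simpa using (hper 0).2
  rw [hxT, hyT, sub_self] at h0
  rw [show (fun t => (p:ℝ) * x t ^ (p-1) * deriv x t * y t ^ (q+1)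
        + x t ^ p * (((q:ℝ)+1) * y t ^ q * deriv y t))
      = (fun t => (p:ℝ) * (x t ^ (p-1) * y t ^ (q+1) * deriv x t)
        + ((q:ℝ)+1) * (x t ^ p * y t ^ q * deriv y t)) from by funext t; ring,
    intervalIntegral.integral_add (by apply Continuous.intervalIntegrable; fun_prop)
      (by apply Continuous.intervalIntegrable; fun_prop),
    intervalIntegral.integral_const_mul, intervalIntegral.integral_const_mul] at h0
  exact h0

lemma Jzero (hx : ContDiff ℝ 1 x) (hy : ContDiff ℝ 1 y)
    (hper : ∀ t : ℝ, x (t + T) = x t ∧ y (t + T) = y t) (i : ℕ) :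
    lineInt x y T i 0 = 0 := by
  have hder : ∀ t ∈ Set.uIcc (0:ℝ) T, HasDerivAt (fun s => x s ^ (i+1))
      (((i:ℝ)+1) * (x t ^ i * y t ^ 0 * deriv x t)) t := by
    intro t _
    have h1 := ((hx.differentiable one_ne_zero t).hasDerivAt).fun_pow (i+1)
    refine h1.congr_deriv ?_
    simp only [Nat.add_sub_cancel]
    push_cast
    ring
  have hint : IntervalIntegrable (fun t => ((i:ℝ)+1) * (x t ^ i * y t ^ 0 * deriv x t))
      MeasureTheory.volume 0 T := by
    apply Continuous.intervalIntegrable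
    have hcx : Continuous x := hx.continuous
    have hcy : Continuous y := hy.continuous
    have hcdx : Continuous (deriv x) := hx.continuous_deriv le_rfl
    fun_prop
  have h0 := intervalIntegral.integral_eq_sub_of_hasDerivAt hder hint
  have hxT : x T = x 0 := by simpa using (hper 0).1
  rw [hxT, sub_self, intervalIntegral.integral_const_mul] at h0
  unfold lineInt
  rcases mul_eq_zero.mp h0 with h | h
  · exact absurd h (by positivity)
  · exact h

end Curve
section Curve2
variable {a b c h : ℝ} {x y : ℝ → ℝ} {T : ℝ}

lemma dHt (hx : ContDiff ℝ 1 x) (hy : ContDiff ℝ 1 y)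
    (hH : ∀ t : ℝ, Hfun a b c (x t) (y t) = h) (t : ℝ) :
    (2*x t + 4*a*x t^3 + 2*b*x t*y t^2) * deriv x t
      + (-2*y t + 4*c*y t^3 + 2*b*x t^2*y t) * deriv y t = 0 := by
  have Hx := (hx.differentiable one_ne_zero t).hasDerivAt
  have Hy := (hy.differentiable one_ne_zero t).hasDerivAt
  have hF : HasDerivAt (fun s => Hfun a b c (x s) (y s))
      ((2*x t + 4*a*x t^3 + 2*b*x t*y t^2) * deriv x t
        + (-2*y t + 4*c*y t^3 + 2*b*x t^2*y t) * deriv y t) t := by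
    have h2 := ((((Hx.fun_pow 2).sub (Hy.fun_pow 2)).add ((Hx.fun_pow 4).const_mul a)).add
        ((Hy.fun_pow 4).const_mul c)).add (((Hx.fun_pow 2).const_mul b).mul (Hy.fun_pow 2))
    have : (fun s => Hfun a b c (x s) (y s))
        = fun s => x s^2 - y s^2 + a * x s^4 + c * y s^4 + b * x s^2 * y s^2 := by
      funext s; simp [Hfun]
    rw [this]
    refine h2.congr_deriv ?_
    norm_num
    ring
  have hconst : (fun s => Hfun a b c (x s) (y s)) = fun _ => h := funext hH
  rw [hconst] at hF
  exact hF.unique (hasDerivAt_const t h)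

lemma rawCx (hx : ContDiff ℝ 1 x) (hy : ContDiff ℝ 1 y)
    (hH : ∀ t : ℝ, Hfun a b c (x t) (y t) = h) (i j : ℕ) :
    lineInt x y T (i+2) j + (-1) * lineInt x y T i (j+2) + a * lineInt x y T (i+4) j
      + c * lineInt x y T i (j+4) + b * lineInt x y T (i+2) (j+2)
      + (-h) * lineInt x y T i j = 0 := by
  have hcx : Continuous x := hx.continuous
  have hcy : Continuous y := hy.continuous
  have hcdx : Continuous (deriv x) := hx.continuous_deriv le_rfl
  have hzero : (∫ t in (0:ℝ)..T, (x t^(i+2) * y t^j * deriv x t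
      + ((-1) * (x t^i * y t^(j+2) * deriv x t)
      + (a * (x t^(i+4) * y t^j * deriv x t)
      + (c * (x t^i * y t^(j+4) * deriv x t)
      + (b * (x t^(i+2) * y t^(j+2) * deriv x t)
      + (-h) * (x t^i * y t^j * deriv x t))))))) = 0 := by
    have hb : (fun t => (x t^(i+2) * y t^j * deriv x t
      + ((-1) * (x t^i * y t^(j+2) * deriv x t)
      + (a * (x t^(i+4) * y t^j * deriv x t)
      + (c * (x t^i * y t^(j+4) * deriv x t)
      + (b * (x t^(i+2) * y t^(j+2) * deriv x t)
      + (-h) * (x t^i * y t^j * deriv x t))))))) = fun _ => (0:ℝ) := by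
      funext t
      have h1 := hH t
      simp only [Hfun] at h1
      linear_combination (x t^i * y t^j * deriv x t) * h1
    rw [hb]
    simp
  rw [intervalIntegral.integral_add (by apply Continuous.intervalIntegrable; fun_prop)
        (by apply Continuous.intervalIntegrable; fun_prop),
      intervalIntegral.integral_add (by apply Continuous.intervalIntegrable; fun_prop)
        (by apply Continuous.intervalIntegrable; fun_prop),
      intervalIntegral.integral_add (by apply Continuous.intervalIntegrable; fun_prop)
        (by apply Continuous.intervalIntegrable; fun_prop),
      intervalIntegral.integral_add (by apply Continuous.intervalIntegrable; fun_prop)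
        (by apply Continuous.intervalIntegrable; fun_prop),
      intervalIntegral.integral_add (by apply Continuous.intervalIntegrable; fun_prop)
        (by apply Continuous.intervalIntegrable; fun_prop),
      intervalIntegral.integral_const_mul, intervalIntegral.integral_const_mul,
      intervalIntegral.integral_const_mul, intervalIntegral.integral_const_mul,
      intervalIntegral.integral_const_mul] at hzero
  unfold lineInt
  linear_combination hzero

end Curve2
section Curve3
variable {a b c h : ℝ} {x y : ℝ → ℝ} {T : ℝ}

lemma rawCy (hx : ContDiff ℝ 1 x) (hy : ContDiff ℝ 1 y)
    (hH : ∀ t : ℝ, Hfun a b c (x t) (y t) = h) (i j : ℕ) :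
    kInt x y T (i+2) j + (-1) * kInt x y T i (j+2) + a * kInt x y T (i+4) j
      + c * kInt x y T i (j+4) + b * kInt x y T (i+2) (j+2)
      + (-h) * kInt x y T i j = 0 := by
  have hcx : Continuous x := hx.continuous
  have hcy : Continuous y := hy.continuous
  have hcdy : Continuous (deriv y) := hy.continuous_deriv le_rfl
  have hzero : (∫ t in (0:ℝ)..T, (x t^(i+2) * y t^j * deriv y t
      + ((-1) * (x t^i * y t^(j+2) * deriv y t)
      + (a * (x t^(i+4) * y t^j * deriv y t)
      + (c * (x t^i * y t^(j+4) * deriv y t)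
      + (b * (x t^(i+2) * y t^(j+2) * deriv y t)
      + (-h) * (x t^i * y t^j * deriv y t))))))) = 0 := by
    have hb : (fun t => (x t^(i+2) * y t^j * deriv y t
      + ((-1) * (x t^i * y t^(j+2) * deriv y t)
      + (a * (x t^(i+4) * y t^j * deriv y t)
      + (c * (x t^i * y t^(j+4) * deriv y t)
      + (b * (x t^(i+2) * y t^(j+2) * deriv y t)
      + (-h) * (x t^i * y t^j * deriv y t))))))) = fun _ => (0:ℝ) := by
      funext t
      have h1 := hH t
      simp only [Hfun] at h1
      linear_combination (x t^i * y t^j * deriv y t) * h1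
    rw [hb]; simp
  rw [intervalIntegral.integral_add (by apply Continuous.intervalIntegrable; fun_prop)
        (by apply Continuous.intervalIntegrable; fun_prop),
      intervalIntegral.integral_add (by apply Continuous.intervalIntegrable; fun_prop)
        (by apply Continuous.intervalIntegrable; fun_prop),
      intervalIntegral.integral_add (by apply Continuous.intervalIntegrable; fun_prop)
        (by apply Continuous.intervalIntegrable; fun_prop),
      intervalIntegral.integral_add (by apply Continuous.intervalIntegrable; fun_prop)
        (by apply Continuous.intervalIntegrable; fun_prop),
      intervalIntegral.integral_add (by apply Continuous.intervalIntegrable; fun_prop)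
        (by apply Continuous.intervalIntegrable; fun_prop),
      intervalIntegral.integral_const_mul, intervalIntegral.integral_const_mul,
      intervalIntegral.integral_const_mul, intervalIntegral.integral_const_mul,
      intervalIntegral.integral_const_mul] at hzero
  unfold kInt
  linear_combination hzero

lemma rawB (hx : ContDiff ℝ 1 x) (hy : ContDiff ℝ 1 y)
    (hH : ∀ t : ℝ, Hfun a b c (x t) (y t) = h) (p q : ℕ) :
    2 * lineInt x y T (p+1) q + 4*a * lineInt x y T (p+3) q
      + 2*b * lineInt x y T (p+1) (q+2) + (-2) * kInt x y T p (q+1)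
      + 4*c * kInt x y T p (q+3) + 2*b * kInt x y T (p+2) (q+1) = 0 := by
  have hcx : Continuous x := hx.continuous
  have hcy : Continuous y := hy.continuous
  have hcdx : Continuous (deriv x) := hx.continuous_deriv le_rfl
  have hcdy : Continuous (deriv y) := hy.continuous_deriv le_rfl
  have hzero : (∫ t in (0:ℝ)..T, (2 * (x t^(p+1) * y t^q * deriv x t)
      + (4*a * (x t^(p+3) * y t^q * deriv x t)
      + (2*b * (x t^(p+1) * y t^(q+2) * deriv x t)
      + ((-2) * (x t^p * y t^(q+1) * deriv y t)
      + (4*c * (x t^p * y t^(q+3) * deriv y t)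
      + 2*b * (x t^(p+2) * y t^(q+1) * deriv y t))))))) = 0 := by
    have hb : (fun t => (2 * (x t^(p+1) * y t^q * deriv x t)
      + (4*a * (x t^(p+3) * y t^q * deriv x t)
      + (2*b * (x t^(p+1) * y t^(q+2) * deriv x t)
      + ((-2) * (x t^p * y t^(q+1) * deriv y t)
      + (4*c * (x t^p * y t^(q+3) * deriv y t)
      + 2*b * (x t^(p+2) * y t^(q+1) * deriv y t))))))) = fun _ => (0:ℝ) := by
      funext t
      have h1 := dHt hx hy hH t
      linear_combination (x t^p * y t^q) * h1
    rw [hb]; simp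
  rw [intervalIntegral.integral_add (by apply Continuous.intervalIntegrable; fun_prop)
        (by apply Continuous.intervalIntegrable; fun_prop),
      intervalIntegral.integral_add (by apply Continuous.intervalIntegrable; fun_prop)
        (by apply Continuous.intervalIntegrable; fun_prop),
      intervalIntegral.integral_add (by apply Continuous.intervalIntegrable; fun_prop)
        (by apply Continuous.intervalIntegrable; fun_prop),
      intervalIntegral.integral_add (by apply Continuous.intervalIntegrable; fun_prop)
        (by apply Continuous.intervalIntegrable; fun_prop),
      intervalIntegral.integral_add (by apply Continuous.intervalIntegrable; fun_prop)
        (by apply Continuous.intervalIntegrable; fun_prop),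
      intervalIntegral.integral_const_mul, intervalIntegral.integral_const_mul,
      intervalIntegral.integral_const_mul, intervalIntegral.integral_const_mul,
      intervalIntegral.integral_const_mul, intervalIntegral.integral_const_mul] at hzero
  unfold lineInt kInt
  linear_combination hzero

end Curve3
section Curve4
variable {a b c h : ℝ} {x y : ℝ → ℝ} {T : ℝ}

lemma Bhat (hx : ContDiff ℝ 1 x) (hy : ContDiff ℝ 1 y)
    (hper : ∀ t : ℝ, x (t + T) = x t ∧ y (t + T) = y t)
    (hH : ∀ t : ℝ, Hfun a b c (x t) (y t) = h) (p q : ℕ) :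
    2*a*((q:ℝ)+2)*((q:ℝ)+4) * lineInt x y T (p+3) q
      + b*((q:ℝ)+4)*((q:ℝ)-(p:ℝ)) * lineInt x y T (p+1) (q+2)
      - 2*c*(p:ℝ)*((q:ℝ)+2) * lineInt x y T (p-1) (q+4)
      + ((q:ℝ)+2)*((q:ℝ)+4) * lineInt x y T (p+1) q
      + (p:ℝ)*((q:ℝ)+4) * lineInt x y T (p-1) (q+2) = 0 := by
  have h0 := rawB (T := T) hx hy hH p q
  have A1 : ((p:ℕ):ℝ) * lineInt x y T (p-1) (q+2) + ((↑(q+1):ℝ)+1) * kInt x y T p (q+1) = 0 :=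
    L1gen hx hy hper p (q+1)
  have A2 : ((p:ℕ):ℝ) * lineInt x y T (p-1) (q+4) + ((↑(q+3):ℝ)+1) * kInt x y T p (q+3) = 0 :=
    L1gen hx hy hper p (q+3)
  have A3 : ((↑(p+2):ℕ):ℝ) * lineInt x y T (p+1) (q+2) + ((↑(q+1):ℝ)+1) * kInt x y T (p+2) (q+1) = 0 :=
    L1gen hx hy hper (p+2) (q+1)
  push_cast at A1 A2 A3
  linear_combination (((q:ℝ)+2)*((q:ℝ)+4)/2) * h0 + ((q:ℝ)+4) * A1
    - 2*c*((q:ℝ)+2) * A2 - b*((q:ℝ)+4) * A3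

lemma Chat (hx : ContDiff ℝ 1 x) (hy : ContDiff ℝ 1 y)
    (hper : ∀ t : ℝ, x (t + T) = x t ∧ y (t + T) = y t)
    (hH : ∀ t : ℝ, Hfun a b c (x t) (y t) = h) (i j : ℕ) :
    a*((i:ℝ)+4)*((j:ℝ)+3)*((j:ℝ)+5) * lineInt x y T (i+3) (j+1)
      + b*((i:ℝ)+2)*((j:ℝ)+1)*((j:ℝ)+5) * lineInt x y T (i+1) (j+3)
      + c*(i:ℝ)*((j:ℝ)+1)*((j:ℝ)+3) * lineInt x y T (i-1) (j+5)
      - h*(i:ℝ)*((j:ℝ)+3)*((j:ℝ)+5) * lineInt x y T (i-1) (j+1)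
      + ((i:ℝ)+2)*((j:ℝ)+3)*((j:ℝ)+5) * lineInt x y T (i+1) (j+1)
      - (i:ℝ)*((j:ℝ)+1)*((j:ℝ)+5) * lineInt x y T (i-1) (j+3) = 0 := by
  have h0 := rawCy (T := T) hx hy hH i j
  have A1 : ((↑(i+2):ℕ):ℝ) * lineInt x y T (i+1) (j+1) + ((↑j:ℝ)+1) * kInt x y T (i+2) j = 0 :=
    L1gen hx hy hper (i+2) j
  have A2 : ((i:ℕ):ℝ) * lineInt x y T (i-1) (j+3) + ((↑(j+2):ℝ)+1) * kInt x y T i (j+2) = 0 :=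
    L1gen hx hy hper i (j+2)
  have A3 : ((↑(i+4):ℕ):ℝ) * lineInt x y T (i+3) (j+1) + ((↑j:ℝ)+1) * kInt x y T (i+4) j = 0 :=
    L1gen hx hy hper (i+4) j
  have A4 : ((i:ℕ):ℝ) * lineInt x y T (i-1) (j+5) + ((↑(j+4):ℝ)+1) * kInt x y T i (j+4) = 0 :=
    L1gen hx hy hper i (j+4)
  have A5 : ((i:ℕ):ℝ) * lineInt x y T (i-1) (j+1) + ((↑j:ℝ)+1) * kInt x y T i j = 0 :=
    L1gen hx hy hper i j
  have A6 : ((↑(i+2):ℕ):ℝ) * lineInt x y T (i+1) (j+3) + ((↑(j+2):ℝ)+1) * kInt x y T (i+2) (j+2) = 0 :=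
    L1gen hx hy hper (i+2) (j+2)
  push_cast at A1 A2 A3 A4 A5 A6
  linear_combination (-((j:ℝ)+1)*((j:ℝ)+3)*((j:ℝ)+5)) * h0
    + ((j:ℝ)+3)*((j:ℝ)+5) * A1 - ((j:ℝ)+1)*((j:ℝ)+5) * A2
    + a*((j:ℝ)+3)*((j:ℝ)+5) * A3 + c*((j:ℝ)+1)*((j:ℝ)+3) * A4
    - h*((j:ℝ)+3)*((j:ℝ)+5) * A5 + b*((j:ℝ)+1)*((j:ℝ)+5) * A6

end Curve4
def Adm (a b c hh : ℝ) (x y : ℝ → ℝ) (T : ℝ) : Prop :=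
  0 < T ∧ ContDiff ℝ 1 x ∧ ContDiff ℝ 1 y ∧ (∀ t : ℝ, x (t + T) = x t ∧ y (t + T) = y t)
    ∧ (∀ t : ℝ, Hfun a b c (x t) (y t) = hh)

def RedD (a b c : ℝ) (D1 : ℕ) (D2 : WithBot ℕ) (i j : ℕ) : Prop :=
  ∃ f1 f2 f3 f4 f5 : Polynomial ℝ,
    f1.degree ≤ (D1 : WithBot ℕ) ∧ f2.degree ≤ D2 ∧ f3.degree ≤ D2 ∧ f5.degree ≤ D2 ∧
    f4.degree < (D1 : WithBot ℕ) ∧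
    ∀ hh x y T, Adm a b c hh x y T →
      lineInt x y T i j = f1.eval hh * lineInt x y T 0 1 + f2.eval hh * lineInt x y T 0 3
        + f3.eval hh * lineInt x y T 2 1 + f4.eval hh * lineInt x y T 2 3
        + f5.eval hh * lineInt x y T 1 2

lemma redD_mono {a b c : ℝ} {D1 D1' : ℕ} {D2 D2' : WithBot ℕ} {i j : ℕ}
    (hr : RedD a b c D1 D2 i j) (h1 : D1 ≤ D1') (h2 : D2 ≤ D2') :
    RedD a b c D1' D2' i j := by
  obtain ⟨f1, f2, f3, f4, f5, b1, b2, b3, b5, b4, hs⟩ := hr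
  have hc : (D1 : WithBot ℕ) ≤ (D1' : WithBot ℕ) := by exact_mod_cast h1
  exact ⟨f1, f2, f3, f4, f5, b1.trans hc, b2.trans h2, b3.trans h2, b5.trans h2,
    lt_of_lt_of_le b4 hc, hs⟩

lemma redD_zero {a b c : ℝ} {D1 : ℕ} {D2 : WithBot ℕ} {i j : ℕ}
    (hz : ∀ hh x y T, Adm a b c hh x y T → lineInt x y T i j = 0) :
    RedD a b c D1 D2 i j := by
  refine ⟨0, 0, 0, 0, 0, by simp, by simp, by simp, by simp, ?_, ?_⟩
  · rw [Polynomial.degree_zero]; exact WithBot.bot_lt_coe D1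
  · intro hh x y T hadm; simp [hz hh x y T hadm]

lemma red01 {a b c : ℝ} : RedD a b c 0 ⊥ 0 1 := by
  refine ⟨1, 0, 0, 0, 0, Polynomial.degree_one_le, by simp, by simp, by simp, ?_, ?_⟩
  · rw [Polynomial.degree_zero]; exact WithBot.bot_lt_coe 0
  · intro hh x y T _; simp

lemma red03 {a b c : ℝ} : RedD a b c 0 0 0 3 := by
  refine ⟨0, 1, 0, 0, 0, by simp, Polynomial.degree_one_le, by simp, by simp, ?_, ?_⟩
  · rw [Polynomial.degree_zero]; exact WithBot.bot_lt_coe 0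
  · intro hh x y T _; simp

lemma red21 {a b c : ℝ} : RedD a b c 0 0 2 1 := by
  refine ⟨0, 0, 1, 0, 0, by simp, by simp, Polynomial.degree_one_le, by simp, ?_, ?_⟩
  · rw [Polynomial.degree_zero]; exact WithBot.bot_lt_coe 0
  · intro hh x y T _; simp

lemma red12 {a b c : ℝ} : RedD a b c 0 0 1 2 := by
  refine ⟨0, 0, 0, 0, 1, by simp, by simp, by simp, Polynomial.degree_one_le, ?_, ?_⟩
  · rw [Polynomial.degree_zero]; exact WithBot.bot_lt_coe 0
  · intro hh x y T _; simp

lemma red23 {a b c : ℝ} : RedD a b c 1 ⊥ 2 3 := by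
  refine ⟨0, 0, 0, 1, 0, by simp, by simp, by simp, by simp, ?_, ?_⟩
  · rw [Polynomial.degree_one]
    exact_mod_cast WithBot.coe_lt_coe.mpr Nat.zero_lt_one
  · intro hh x y T _; simp

lemma redD_comb {a b c : ℝ} {D1 : ℕ} {D2 : WithBot ℕ} {i j : ℕ}
    (p q E1 d : Fin 5 → ℕ) (E2 : Fin 5 → WithBot ℕ) (g : Fin 5 → Polynomial ℝ)
    (hred : ∀ m, RedD a b c (E1 m) (E2 m) (p m) (q m))
    (hdg : ∀ m, (g m).degree ≤ (d m : WithBot ℕ))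
    (hD1 : ∀ m, d m + E1 m ≤ D1)
    (hD2 : ∀ m, (d m : WithBot ℕ) + E2 m ≤ D2)
    (hsat : ∀ hh x y T, Adm a b c hh x y T →
      lineInt x y T i j = ∑ m : Fin 5, (g m).eval hh * lineInt x y T (p m) (q m)) :
    RedD a b c D1 D2 i j := by
  choose f1 f2 f3 f4 f5 b1 b2 b3 b5 b4 hs using hred
  have bnd : ∀ (f : Fin 5 → Polynomial ℝ), (∀ m, (f m).degree ≤ E2 m) →
      (∑ m, g m * f m).degree ≤ D2 := by
    intro f hf
    refine (Polynomial.degree_sum_le _ _).trans (Finset.sup_le fun m _ => ?_)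
    refine (Polynomial.degree_mul_le _ _).trans ?_
    exact (add_le_add (hdg m) (hf m)).trans (hD2 m)
  refine ⟨∑ m, g m * f1 m, ∑ m, g m * f2 m, ∑ m, g m * f3 m, ∑ m, g m * f4 m,
    ∑ m, g m * f5 m, ?_, bnd f2 b2, bnd f3 b3, bnd f5 b5, ?_, ?_⟩
  · refine (Polynomial.degree_sum_le _ _).trans (Finset.sup_le fun m _ => ?_)
    refine (Polynomial.degree_mul_le _ _).trans ?_
    refine (add_le_add (hdg m) (b1 m)).trans ?_
    exact_mod_cast hD1 m
  · refine lt_of_le_of_lt (Polynomial.degree_sum_le _ _) ?_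
    refine (Finset.sup_lt_iff (WithBot.bot_lt_coe D1)).mpr fun m _ => ?_
    rcases eq_or_ne (g m) 0 with h0 | h0
    · simp [h0, WithBot.bot_lt_coe]
    · refine lt_of_le_of_lt (Polynomial.degree_mul_le _ _) ?_
      have hgb : (g m).degree ≠ ⊥ := by simpa [Polynomial.degree_eq_bot] using h0
      have st : (g m).degree + (f4 m).degree < (g m).degree + (E1 m : WithBot ℕ) :=
        WithBot.add_lt_add_left hgb (b4 m)
      refine lt_of_lt_of_le st ?_
      refine (add_le_add_left (hdg m) _).trans ?_
      simp only [Nat.cast_withBot, Nat.cast_id, ← WithBot.coe_add]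
      exact WithBot.coe_le_coe.mpr (hD1 m)
  · intro hh x y T hadm
    rw [hsat hh x y T hadm, eq_comm]
    simp only [Polynomial.eval_finset_sum, Polynomial.eval_mul, Finset.sum_mul,
      ← Finset.sum_add_distrib]
    refine Finset.sum_congr rfl fun m _ => ?_
    rw [hs m hh x y T hadm]
    ring
section Base5
variable {a b c : ℝ}

lemma red32 (ha : a ≠ 0) (hdd : 4*a*c - b^2 ≠ 0) : RedD a b c 1 ((0:ℕ) : WithBot ℕ) 3 2 := by
  have hd : 48*a*c - 12*b^2 ≠ 0 := by
    intro hz; apply hdd; linarith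
  refine redD_comb ![1,0,0,0,0] ![2,3,3,3,3] ![0,0,0,0,0] ![0,0,0,0,0]
    ![((0:ℕ):WithBot ℕ),((0:ℕ):WithBot ℕ),((0:ℕ):WithBot ℕ),((0:ℕ):WithBot ℕ),((0:ℕ):WithBot ℕ)]
    ![Polynomial.C ((-24*c-12*b)/(48*a*c-12*b^2)), 0, 0, 0, 0] ?_ ?_ ?_ ?_ ?_
  · intro m; fin_cases m
    · exact red12
    · exact red03
    · exact red03
    · exact red03
    · exact red03
  · intro m; fin_cases m <;> simp [Polynomial.degree_C_le]
  · intro m; fin_cases m <;> simp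
  · intro m; fin_cases m <;> simp
  · rintro hh x y T ⟨hT, hx, hy, hper, hH⟩
    simp only [Fin.sum_univ_five, Matrix.cons_val_zero, Matrix.cons_val_one, Matrix.head_cons,
      Matrix.cons_val_two, Matrix.tail_cons, Matrix.cons_val_three, Matrix.cons_val_four,
      Polynomial.eval_C, Polynomial.eval_zero, zero_mul, add_zero]
    have hB : 2*a*(((2:ℕ):ℝ)+2)*(((2:ℕ):ℝ)+4) * lineInt x y T 3 2
        + b*(((2:ℕ):ℝ)+4)*(((2:ℕ):ℝ)-((0:ℕ):ℝ)) * lineInt x y T 1 4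
        - 2*c*((0:ℕ):ℝ)*(((2:ℕ):ℝ)+2) * lineInt x y T 0 6
        + (((2:ℕ):ℝ)+2)*(((2:ℕ):ℝ)+4) * lineInt x y T 1 2
        + ((0:ℕ):ℝ)*(((2:ℕ):ℝ)+4) * lineInt x y T 0 4 = 0 := Bhat hx hy hper hH 0 2
    have hC := rawCx (T := T) hx hy hH 1 0
    have z1 : lineInt x y T 5 0 = 0 := Jzero hx hy hper 5
    have z2 : lineInt x y T 3 0 = 0 := Jzero hx hy hper 3
    have z3 : lineInt x y T 1 0 = 0 := Jzero hx hy hper 1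
    push_cast at hB
    rw [div_mul_eq_mul_div, eq_div_iff hd]
    linear_combination c * hB - 12*b*hC + 12*b*z2 + 12*a*b*z1 - 12*b*hh*z3

end Base5
section Tails
variable {a b c : ℝ}

lemma degCle (e : ℝ) : (Polynomial.C e).degree ≤ ((0:ℕ) : WithBot ℕ) := by
  simpa using Polynomial.degree_C_le
lemma degCXle (e : ℝ) : (Polynomial.C e * Polynomial.X).degree ≤ ((1:ℕ) : WithBot ℕ) := by
  simpa using Polynomial.degree_C_mul_X_le e
lemma wble {d e D : ℕ} (h : d + e ≤ D) : (d:WithBot ℕ) + ((e:ℕ):WithBot ℕ) ≤ ((D:ℕ):WithBot ℕ) := by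
  exact_mod_cast h

lemma redE1 (k : ℕ) (ha : a ≠ 0) (hc : c ≠ 0) (hdd : 4*a*c - b^2 ≠ 0)
    (IH2 : ∀ i j, i + j = 2*k+5 → RedD a b c ((2*k+4)/4) (((2*k+2)/4 : ℕ):WithBot ℕ) i j)
    (IH4 : ∀ i j, i + j = 2*k+3 → RedD a b c ((2*k+2)/4) ((((2*k)/4) : ℕ):WithBot ℕ) i j) :
    RedD a b c ((2*k+6)/4) (((2*k+4)/4 : ℕ):WithBot ℕ) 4 (2*k+3) := by
  have hdet : (2*a*(2*(k:ℝ)+3)*(2*(k:ℝ)+5)*(2*(k:ℝ)+8)^2*(4*a*c-b^2)) ≠ 0 := by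
    have h1 : (2*(k:ℝ)+3) ≠ 0 := by positivity
    have h2 : (2*(k:ℝ)+5) ≠ 0 := by positivity
    have h3 : ((2*(k:ℝ)+8)^2) ≠ 0 := by positivity
    have h4 : 4*a*c-b^2 ≠ 0 := fun hz => hdd (by linarith)
    exact mul_ne_zero (mul_ne_zero (mul_ne_zero (mul_ne_zero (by simpa using ha) h1) h2) h3) h4
  refine redD_comb ![0, 0, 2, 2, 4] ![2*k+3, 2*k+5, 2*k+1, 2*k+3, 2*k+1]
    ![(2*k+2)/4, (2*k+4)/4, (2*k+2)/4, (2*k+4)/4, (2*k+4)/4] ![1, 0, 1, 0, 0]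
    ![((((2*k)/4) : ℕ):WithBot ℕ), (((2*k+2)/4 : ℕ):WithBot ℕ), ((((2*k)/4) : ℕ):WithBot ℕ), (((2*k+2)/4 : ℕ):WithBot ℕ), (((2*k+2)/4 : ℕ):WithBot ℕ)]
    ![Polynomial.C (((960*a*c +1264*(k:ℝ)*a*c +512*(k:ℝ)^2*a*c +64*(k:ℝ)^3*a*c))/(2*a*(2*(k:ℝ)+3)*(2*(k:ℝ)+5)*(2*(k:ℝ)+8)^2*(4*a*c-b^2))) * Polynomial.X,
      Polynomial.C (((288*a*c +456*(k:ℝ)*a*c +224*(k:ℝ)^2*a*c +32*(k:ℝ)^3*a*c))/(2*a*(2*(k:ℝ)+3)*(2*(k:ℝ)+5)*(2*(k:ℝ)+8)^2*(4*a*c-b^2))),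
      Polynomial.C (((-1440*a*b -2856*(k:ℝ)*a*b -2032*(k:ℝ)^2*a*b -608*(k:ℝ)^3*a*b -64*(k:ℝ)^4*a*b))/(2*a*(2*(k:ℝ)+3)*(2*(k:ℝ)+5)*(2*(k:ℝ)+8)^2*(4*a*c-b^2))) * Polynomial.X,
      Polynomial.C (((-4320*a*c -2160*a*b -6648*(k:ℝ)*a*c -3804*(k:ℝ)*a*b -3568*(k:ℝ)^2*a*c -2416*(k:ℝ)^2*a*b -800*(k:ℝ)^3*a*c -656*(k:ℝ)^3*a*b -64*(k:ℝ)^4*a*c -64*(k:ℝ)^4*a*b))/(2*a*(2*(k:ℝ)+3)*(2*(k:ℝ)+5)*(2*(k:ℝ)+8)^2*(4*a*c-b^2))),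
      Polynomial.C (((720*a*b +1428*(k:ℝ)*a*b +1016*(k:ℝ)^2*a*b +304*(k:ℝ)^3*a*b +32*(k:ℝ)^4*a*b))/(2*a*(2*(k:ℝ)+3)*(2*(k:ℝ)+5)*(2*(k:ℝ)+8)^2*(4*a*c-b^2)))]
    ?_ ?_ ?_ ?_ ?_
  · intro m; fin_cases m
    · exact IH4 0 (2*k+3) (by omega)
    · exact IH2 0 (2*k+5) (by omega)
    · exact IH4 2 (2*k+1) (by omega)
    · exact IH2 2 (2*k+3) (by omega)
    · exact IH2 4 (2*k+1) (by omega)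
  · intro m; fin_cases m
    · exact degCXle _
    · exact degCle _
    · exact degCXle _
    · exact degCle _
    · exact degCle _
  · intro m; fin_cases m
    · exact (show (1:ℕ) + (2*k+2)/4 ≤ (2*k+6)/4 by omega)
    · exact (show (0:ℕ) + (2*k+4)/4 ≤ (2*k+6)/4 by omega)
    · exact (show (1:ℕ) + (2*k+2)/4 ≤ (2*k+6)/4 by omega)
    · exact (show (0:ℕ) + (2*k+4)/4 ≤ (2*k+6)/4 by omega)
    · exact (show (0:ℕ) + (2*k+4)/4 ≤ (2*k+6)/4 by omega)
  · intro m; fin_cases m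
    · exact wble (show (1:ℕ) + (2*k)/4 ≤ (2*k+4)/4 by omega)
    · exact wble (show (0:ℕ) + (2*k+2)/4 ≤ (2*k+4)/4 by omega)
    · exact wble (show (1:ℕ) + (2*k)/4 ≤ (2*k+4)/4 by omega)
    · exact wble (show (0:ℕ) + (2*k+2)/4 ≤ (2*k+4)/4 by omega)
    · exact wble (show (0:ℕ) + (2*k+2)/4 ≤ (2*k+4)/4 by omega)
  · rintro hh x y T ⟨hT, hx, hy, hper, hH⟩
    have hB : 2*a*(((2*k+1:ℕ):ℝ)+2)*(((2*k+1:ℕ):ℝ)+4) * lineInt x y T 6 (2*k+1)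
        + b*(((2*k+1:ℕ):ℝ)+4)*(((2*k+1:ℕ):ℝ)-((3:ℕ):ℝ)) * lineInt x y T 4 (2*k+3)
        - 2*c*((3:ℕ):ℝ)*(((2*k+1:ℕ):ℝ)+2) * lineInt x y T 2 (2*k+5)
        + (((2*k+1:ℕ):ℝ)+2)*(((2*k+1:ℕ):ℝ)+4) * lineInt x y T 4 (2*k+1)
        + ((3:ℕ):ℝ)*(((2*k+1:ℕ):ℝ)+4) * lineInt x y T 2 (2*k+3) = 0 :=
      Bhat hx hy hper hH 3 (2*k+1)
    have hC : lineInt x y T 4 (2*k+1) + (-1) * lineInt x y T 2 (2*k+3)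
        + a * lineInt x y T 6 (2*k+1) + c * lineInt x y T 2 (2*k+5)
        + b * lineInt x y T 4 (2*k+3) + (-hh) * lineInt x y T 2 (2*k+1) = 0 :=
      rawCx (T := T) hx hy hH 2 (2*k+1)
    have hC2 : lineInt x y T 2 (2*k+3) + (-1) * lineInt x y T 0 (2*k+5)
        + a * lineInt x y T 4 (2*k+3) + c * lineInt x y T 0 (2*k+7)
        + b * lineInt x y T 2 (2*k+5) + (-hh) * lineInt x y T 0 (2*k+3) = 0 :=
      rawCx (T := T) hx hy hH 0 (2*k+3)
    have hC' : a*(((1:ℕ):ℝ)+4)*(((2*k+2:ℕ):ℝ)+3)*(((2*k+2:ℕ):ℝ)+5) * lineInt x y T 4 (2*k+3)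
        + b*(((1:ℕ):ℝ)+2)*(((2*k+2:ℕ):ℝ)+1)*(((2*k+2:ℕ):ℝ)+5) * lineInt x y T 2 (2*k+5)
        + c*((1:ℕ):ℝ)*(((2*k+2:ℕ):ℝ)+1)*(((2*k+2:ℕ):ℝ)+3) * lineInt x y T 0 (2*k+7)
        - hh*((1:ℕ):ℝ)*(((2*k+2:ℕ):ℝ)+3)*(((2*k+2:ℕ):ℝ)+5) * lineInt x y T 0 (2*k+3)
        + (((1:ℕ):ℝ)+2)*(((2*k+2:ℕ):ℝ)+3)*(((2*k+2:ℕ):ℝ)+5) * lineInt x y T 2 (2*k+3)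
        - ((1:ℕ):ℝ)*(((2*k+2:ℕ):ℝ)+1)*(((2*k+2:ℕ):ℝ)+5) * lineInt x y T 0 (2*k+5) = 0 :=
      Chat hx hy hper hH 1 (2*k+2)
    push_cast at hB hC'
    have key : (2*a*(2*(k:ℝ)+3)*(2*(k:ℝ)+5)*(2*(k:ℝ)+8)^2*(4*a*c-b^2)) * lineInt x y T 4 (2*k+3) =
        ((960*a*c +1264*(k:ℝ)*a*c +512*(k:ℝ)^2*a*c +64*(k:ℝ)^3*a*c)) * hh * lineInt x y T 0 (2*k+3)
        +
        ((288*a*c +456*(k:ℝ)*a*c +224*(k:ℝ)^2*a*c +32*(k:ℝ)^3*a*c)) * lineInt x y T 0 (2*k+5)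
        +
        ((-1440*a*b -2856*(k:ℝ)*a*b -2032*(k:ℝ)^2*a*b -608*(k:ℝ)^3*a*b -64*(k:ℝ)^4*a*b)) * hh * lineInt x y T 2 (2*k+1)
        +
        ((-4320*a*c -2160*a*b -6648*(k:ℝ)*a*c -3804*(k:ℝ)*a*b -3568*(k:ℝ)^2*a*c -2416*(k:ℝ)^2*a*b -800*(k:ℝ)^3*a*c -656*(k:ℝ)^3*a*b -64*(k:ℝ)^4*a*c -64*(k:ℝ)^4*a*b)) * lineInt x y T 2 (2*k+3)
        +
        ((720*a*b +1428*(k:ℝ)*a*b +1016*(k:ℝ)^2*a*b +304*(k:ℝ)^3*a*b +32*(k:ℝ)^4*a*b)) * lineInt x y T 4 (2*k+1)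
        := by linear_combination (-(2*a*(2*(k:ℝ)+3)*(2*(k:ℝ)+8))*(2*b*(2*(k:ℝ)+3)*(2*(k:ℝ)+8)) + 6*(2*(k:ℝ)+3)*a*(2*b*(2*(k:ℝ)+3)*(2*(k:ℝ)+8))) * hC + (a*(2*b*(2*(k:ℝ)+3)*(2*(k:ℝ)+8))) * hB + (-c*(2*a*(2*(k:ℝ)+3)*(2*(k:ℝ)+8))*(2*(k:ℝ)+3)*(2*(k:ℝ)+5)) * hC2 + (c*(2*a*(2*(k:ℝ)+3)*(2*(k:ℝ)+8))) * hC'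
    simp only [Fin.sum_univ_five, Matrix.cons_val_zero, Matrix.cons_val_one, Matrix.head_cons,
      Matrix.cons_val_two, Matrix.tail_cons, Matrix.cons_val_three, Matrix.cons_val_four,
      Polynomial.eval_mul, Polynomial.eval_C, Polynomial.eval_X]
    generalize (2*a*(2*(k:ℝ)+3)*(2*(k:ℝ)+5)*(2*(k:ℝ)+8)^2*(4*a*c-b^2)) = D at hdet key ⊢
    field_simp
    linear_combination key

lemma redE2 (k : ℕ) (ha : a ≠ 0) (hc : c ≠ 0) (hdd : 4*a*c - b^2 ≠ 0)
    (IH2 : ∀ i j, i + j = 2*k+5 → RedD a b c ((2*k+4)/4) (((2*k+2)/4 : ℕ):WithBot ℕ) i j)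
    (IH4 : ∀ i j, i + j = 2*k+3 → RedD a b c ((2*k+2)/4) ((((2*k)/4) : ℕ):WithBot ℕ) i j) :
    RedD a b c ((2*k+6)/4) (((2*k+4)/4 : ℕ):WithBot ℕ) 2 (2*k+5) := by
  have hdet : (2*a*(2*(k:ℝ)+3)*(2*(k:ℝ)+5)*(2*(k:ℝ)+8)^2*(4*a*c-b^2)) ≠ 0 := by
    have h1 : (2*(k:ℝ)+3) ≠ 0 := by positivity
    have h2 : (2*(k:ℝ)+5) ≠ 0 := by positivity
    have h3 : ((2*(k:ℝ)+8)^2) ≠ 0 := by positivity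
    have h4 : 4*a*c-b^2 ≠ 0 := fun hz => hdd (by linarith)
    exact mul_ne_zero (mul_ne_zero (mul_ne_zero (mul_ne_zero (by simpa using ha) h1) h2) h3) h4
  refine redD_comb ![0, 0, 2, 2, 4] ![2*k+3, 2*k+5, 2*k+1, 2*k+3, 2*k+1]
    ![(2*k+2)/4, (2*k+4)/4, (2*k+2)/4, (2*k+4)/4, (2*k+4)/4] ![1, 0, 1, 0, 0]
    ![((((2*k)/4) : ℕ):WithBot ℕ), (((2*k+2)/4 : ℕ):WithBot ℕ), ((((2*k)/4) : ℕ):WithBot ℕ), (((2*k+2)/4 : ℕ):WithBot ℕ), (((2*k+2)/4 : ℕ):WithBot ℕ)]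
    ![Polynomial.C (((-800*a*b -840*(k:ℝ)*a*b -288*(k:ℝ)^2*a*b -32*(k:ℝ)^3*a*b))/(2*a*(2*(k:ℝ)+3)*(2*(k:ℝ)+5)*(2*(k:ℝ)+8)^2*(4*a*c-b^2))) * Polynomial.X,
      Polynomial.C (((-240*a*b -316*(k:ℝ)*a*b -128*(k:ℝ)^2*a*b -16*(k:ℝ)^3*a*b))/(2*a*(2*(k:ℝ)+3)*(2*(k:ℝ)+5)*(2*(k:ℝ)+8)^2*(4*a*c-b^2))),
      Polynomial.C (((4800*a^2 +8240*(k:ℝ)*a^2 +5088*(k:ℝ)^2*a^2 +1344*(k:ℝ)^3*a^2 +128*(k:ℝ)^4*a^2))/(2*a*(2*(k:ℝ)+3)*(2*(k:ℝ)+5)*(2*(k:ℝ)+8)^2*(4*a*c-b^2))) * Polynomial.X,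
      Polynomial.C (((3600*a*b +7200*a^2 +4580*(k:ℝ)*a*b +10760*(k:ℝ)*a^2 +2136*(k:ℝ)^2*a*b +5952*(k:ℝ)^2*a^2 +432*(k:ℝ)^3*a*b +1440*(k:ℝ)^3*a^2 +32*(k:ℝ)^4*a*b +128*(k:ℝ)^4*a^2))/(2*a*(2*(k:ℝ)+3)*(2*(k:ℝ)+5)*(2*(k:ℝ)+8)^2*(4*a*c-b^2))),
      Polynomial.C (((-2400*a^2 -4120*(k:ℝ)*a^2 -2544*(k:ℝ)^2*a^2 -672*(k:ℝ)^3*a^2 -64*(k:ℝ)^4*a^2))/(2*a*(2*(k:ℝ)+3)*(2*(k:ℝ)+5)*(2*(k:ℝ)+8)^2*(4*a*c-b^2)))]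
    ?_ ?_ ?_ ?_ ?_
  · intro m; fin_cases m
    · exact IH4 0 (2*k+3) (by omega)
    · exact IH2 0 (2*k+5) (by omega)
    · exact IH4 2 (2*k+1) (by omega)
    · exact IH2 2 (2*k+3) (by omega)
    · exact IH2 4 (2*k+1) (by omega)
  · intro m; fin_cases m
    · exact degCXle _
    · exact degCle _
    · exact degCXle _
    · exact degCle _
    · exact degCle _
  · intro m; fin_cases m
    · exact (show (1:ℕ) + (2*k+2)/4 ≤ (2*k+6)/4 by omega)
    · exact (show (0:ℕ) + (2*k+4)/4 ≤ (2*k+6)/4 by omega)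
    · exact (show (1:ℕ) + (2*k+2)/4 ≤ (2*k+6)/4 by omega)
    · exact (show (0:ℕ) + (2*k+4)/4 ≤ (2*k+6)/4 by omega)
    · exact (show (0:ℕ) + (2*k+4)/4 ≤ (2*k+6)/4 by omega)
  · intro m; fin_cases m
    · exact wble (show (1:ℕ) + (2*k)/4 ≤ (2*k+4)/4 by omega)
    · exact wble (show (0:ℕ) + (2*k+2)/4 ≤ (2*k+4)/4 by omega)
    · exact wble (show (1:ℕ) + (2*k)/4 ≤ (2*k+4)/4 by omega)
    · exact wble (show (0:ℕ) + (2*k+2)/4 ≤ (2*k+4)/4 by omega)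
    · exact wble (show (0:ℕ) + (2*k+2)/4 ≤ (2*k+4)/4 by omega)
  · rintro hh x y T ⟨hT, hx, hy, hper, hH⟩
    have hB : 2*a*(((2*k+1:ℕ):ℝ)+2)*(((2*k+1:ℕ):ℝ)+4) * lineInt x y T 6 (2*k+1)
        + b*(((2*k+1:ℕ):ℝ)+4)*(((2*k+1:ℕ):ℝ)-((3:ℕ):ℝ)) * lineInt x y T 4 (2*k+3)
        - 2*c*((3:ℕ):ℝ)*(((2*k+1:ℕ):ℝ)+2) * lineInt x y T 2 (2*k+5)
        + (((2*k+1:ℕ):ℝ)+2)*(((2*k+1:ℕ):ℝ)+4) * lineInt x y T 4 (2*k+1)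
        + ((3:ℕ):ℝ)*(((2*k+1:ℕ):ℝ)+4) * lineInt x y T 2 (2*k+3) = 0 :=
      Bhat hx hy hper hH 3 (2*k+1)
    have hC : lineInt x y T 4 (2*k+1) + (-1) * lineInt x y T 2 (2*k+3)
        + a * lineInt x y T 6 (2*k+1) + c * lineInt x y T 2 (2*k+5)
        + b * lineInt x y T 4 (2*k+3) + (-hh) * lineInt x y T 2 (2*k+1) = 0 :=
      rawCx (T := T) hx hy hH 2 (2*k+1)
    have hC2 : lineInt x y T 2 (2*k+3) + (-1) * lineInt x y T 0 (2*k+5)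
        + a * lineInt x y T 4 (2*k+3) + c * lineInt x y T 0 (2*k+7)
        + b * lineInt x y T 2 (2*k+5) + (-hh) * lineInt x y T 0 (2*k+3) = 0 :=
      rawCx (T := T) hx hy hH 0 (2*k+3)
    have hC' : a*(((1:ℕ):ℝ)+4)*(((2*k+2:ℕ):ℝ)+3)*(((2*k+2:ℕ):ℝ)+5) * lineInt x y T 4 (2*k+3)
        + b*(((1:ℕ):ℝ)+2)*(((2*k+2:ℕ):ℝ)+1)*(((2*k+2:ℕ):ℝ)+5) * lineInt x y T 2 (2*k+5)
        + c*((1:ℕ):ℝ)*(((2*k+2:ℕ):ℝ)+1)*(((2*k+2:ℕ):ℝ)+3) * lineInt x y T 0 (2*k+7)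
        - hh*((1:ℕ):ℝ)*(((2*k+2:ℕ):ℝ)+3)*(((2*k+2:ℕ):ℝ)+5) * lineInt x y T 0 (2*k+3)
        + (((1:ℕ):ℝ)+2)*(((2*k+2:ℕ):ℝ)+3)*(((2*k+2:ℕ):ℝ)+5) * lineInt x y T 2 (2*k+3)
        - ((1:ℕ):ℝ)*(((2*k+2:ℕ):ℝ)+1)*(((2*k+2:ℕ):ℝ)+5) * lineInt x y T 0 (2*k+5) = 0 :=
      Chat hx hy hper hH 1 (2*k+2)
    push_cast at hB hC'
    have key : (2*a*(2*(k:ℝ)+3)*(2*(k:ℝ)+5)*(2*(k:ℝ)+8)^2*(4*a*c-b^2)) * lineInt x y T 2 (2*k+5) =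
        ((-800*a*b -840*(k:ℝ)*a*b -288*(k:ℝ)^2*a*b -32*(k:ℝ)^3*a*b)) * hh * lineInt x y T 0 (2*k+3)
        +
        ((-240*a*b -316*(k:ℝ)*a*b -128*(k:ℝ)^2*a*b -16*(k:ℝ)^3*a*b)) * lineInt x y T 0 (2*k+5)
        +
        ((4800*a^2 +8240*(k:ℝ)*a^2 +5088*(k:ℝ)^2*a^2 +1344*(k:ℝ)^3*a^2 +128*(k:ℝ)^4*a^2)) * hh * lineInt x y T 2 (2*k+1)
        +
        ((3600*a*b +7200*a^2 +4580*(k:ℝ)*a*b +10760*(k:ℝ)*a^2 +2136*(k:ℝ)^2*a*b +5952*(k:ℝ)^2*a^2 +432*(k:ℝ)^3*a*b +1440*(k:ℝ)^3*a^2 +32*(k:ℝ)^4*a*b +128*(k:ℝ)^4*a^2)) * lineInt x y T 2 (2*k+3)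
        +
        ((-2400*a^2 -4120*(k:ℝ)*a^2 -2544*(k:ℝ)^2*a^2 -672*(k:ℝ)^3*a^2 -64*(k:ℝ)^4*a^2)) * lineInt x y T 4 (2*k+1)
        := by linear_combination ((2*a*(2*(k:ℝ)+3)*(2*(k:ℝ)+8))*(4*a*(2*(k:ℝ)+5)*(2*(k:ℝ)+8)) - 6*(2*(k:ℝ)+3)*a*(4*a*(2*(k:ℝ)+5)*(2*(k:ℝ)+8))) * hC + (-a*(4*a*(2*(k:ℝ)+5)*(2*(k:ℝ)+8))) * hB + (-(a*(b*(2*(k:ℝ)+1)*(2*(k:ℝ)+8))-b*(2*a*(2*(k:ℝ)+3)*(2*(k:ℝ)+8)))*(2*(k:ℝ)+3)*(2*(k:ℝ)+5)) * hC2 + ((a*(b*(2*(k:ℝ)+1)*(2*(k:ℝ)+8))-b*(2*a*(2*(k:ℝ)+3)*(2*(k:ℝ)+8)))) * hC'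
    simp only [Fin.sum_univ_five, Matrix.cons_val_zero, Matrix.cons_val_one, Matrix.head_cons,
      Matrix.cons_val_two, Matrix.tail_cons, Matrix.cons_val_three, Matrix.cons_val_four,
      Polynomial.eval_mul, Polynomial.eval_C, Polynomial.eval_X]
    generalize (2*a*(2*(k:ℝ)+3)*(2*(k:ℝ)+5)*(2*(k:ℝ)+8)^2*(4*a*c-b^2)) = D at hdet key ⊢
    field_simp
    linear_combination key

lemma redO1 (k : ℕ) (ha : a ≠ 0) (hc : c ≠ 0) (hdd : 4*a*c - b^2 ≠ 0)
    (IH2 : ∀ i j, i + j = 2*k+5 → RedD a b c ((2*k+4)/4) (((2*k+2)/4 : ℕ):WithBot ℕ) i j)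
    (IH4 : ∀ i j, i + j = 2*k+3 → RedD a b c ((2*k+2)/4) ((((2*k)/4) : ℕ):WithBot ℕ) i j) :
    RedD a b c ((2*k+6)/4) (((2*k+4)/4 : ℕ):WithBot ℕ) 5 (2*k+2) := by
  have hdet : (2*a*(2*(k:ℝ)+2)*(2*(k:ℝ)+4)*(2*(k:ℝ)+8)^2*(4*a*c-b^2)) ≠ 0 := by
    have h1 : (2*(k:ℝ)+2) ≠ 0 := by positivity
    have h2 : (2*(k:ℝ)+4) ≠ 0 := by positivity
    have h3 : ((2*(k:ℝ)+8)^2) ≠ 0 := by positivity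
    have h4 : 4*a*c-b^2 ≠ 0 := fun hz => hdd (by linarith)
    exact mul_ne_zero (mul_ne_zero (mul_ne_zero (mul_ne_zero (by simpa using ha) h1) h2) h3) h4
  refine redD_comb ![1, 1, 3, 3, 5] ![2*k+2, 2*k+4, 2*k, 2*k+2, 2*k]
    ![(2*k+2)/4, (2*k+4)/4, (2*k+2)/4, (2*k+4)/4, (2*k+4)/4] ![1, 0, 1, 0, 0]
    ![((((2*k)/4) : ℕ):WithBot ℕ), (((2*k+2)/4 : ℕ):WithBot ℕ), ((((2*k)/4) : ℕ):WithBot ℕ), (((2*k+2)/4 : ℕ):WithBot ℕ), (((2*k+2)/4 : ℕ):WithBot ℕ)]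
    ![Polynomial.C (((1024*a*c +1792*(k:ℝ)*a*c +896*(k:ℝ)^2*a*c +128*(k:ℝ)^3*a*c))/(2*a*(2*(k:ℝ)+2)*(2*(k:ℝ)+4)*(2*(k:ℝ)+8)^2*(4*a*c-b^2))) * Polynomial.X,
      Polynomial.C (((256*a*c +576*(k:ℝ)*a*c +384*(k:ℝ)^2*a*c +64*(k:ℝ)^3*a*c))/(2*a*(2*(k:ℝ)+2)*(2*(k:ℝ)+4)*(2*(k:ℝ)+8)^2*(4*a*c-b^2))),
      Polynomial.C (((-512*a*b -1408*(k:ℝ)*a*b -1344*(k:ℝ)^2*a*b -512*(k:ℝ)^3*a*b -64*(k:ℝ)^4*a*b))/(2*a*(2*(k:ℝ)+2)*(2*(k:ℝ)+4)*(2*(k:ℝ)+8)^2*(4*a*c-b^2))) * Polynomial.X,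
      Polynomial.C (((-2560*a*c -1024*a*b -4992*(k:ℝ)*a*c -2304*(k:ℝ)*a*b -3136*(k:ℝ)^2*a*c -1792*(k:ℝ)^2*a*b -768*(k:ℝ)^3*a*c -576*(k:ℝ)^3*a*b -64*(k:ℝ)^4*a*c -64*(k:ℝ)^4*a*b))/(2*a*(2*(k:ℝ)+2)*(2*(k:ℝ)+4)*(2*(k:ℝ)+8)^2*(4*a*c-b^2))),
      Polynomial.C (((256*a*b +704*(k:ℝ)*a*b +672*(k:ℝ)^2*a*b +256*(k:ℝ)^3*a*b +32*(k:ℝ)^4*a*b))/(2*a*(2*(k:ℝ)+2)*(2*(k:ℝ)+4)*(2*(k:ℝ)+8)^2*(4*a*c-b^2)))]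
    ?_ ?_ ?_ ?_ ?_
  · intro m; fin_cases m
    · exact IH4 1 (2*k+2) (by omega)
    · exact IH2 1 (2*k+4) (by omega)
    · exact IH4 3 (2*k) (by omega)
    · exact IH2 3 (2*k+2) (by omega)
    · exact IH2 5 (2*k) (by omega)
  · intro m; fin_cases m
    · exact degCXle _
    · exact degCle _
    · exact degCXle _
    · exact degCle _
    · exact degCle _
  · intro m; fin_cases m
    · exact (show (1:ℕ) + (2*k+2)/4 ≤ (2*k+6)/4 by omega)
    · exact (show (0:ℕ) + (2*k+4)/4 ≤ (2*k+6)/4 by omega)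
    · exact (show (1:ℕ) + (2*k+2)/4 ≤ (2*k+6)/4 by omega)
    · exact (show (0:ℕ) + (2*k+4)/4 ≤ (2*k+6)/4 by omega)
    · exact (show (0:ℕ) + (2*k+4)/4 ≤ (2*k+6)/4 by omega)
  · intro m; fin_cases m
    · exact wble (show (1:ℕ) + (2*k)/4 ≤ (2*k+4)/4 by omega)
    · exact wble (show (0:ℕ) + (2*k+2)/4 ≤ (2*k+4)/4 by omega)
    · exact wble (show (1:ℕ) + (2*k)/4 ≤ (2*k+4)/4 by omega)
    · exact wble (show (0:ℕ) + (2*k+2)/4 ≤ (2*k+4)/4 by omega)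
    · exact wble (show (0:ℕ) + (2*k+2)/4 ≤ (2*k+4)/4 by omega)
  · rintro hh x y T ⟨hT, hx, hy, hper, hH⟩
    have hB : 2*a*(((2*k:ℕ):ℝ)+2)*(((2*k:ℕ):ℝ)+4) * lineInt x y T 7 (2*k)
        + b*(((2*k:ℕ):ℝ)+4)*(((2*k:ℕ):ℝ)-((4:ℕ):ℝ)) * lineInt x y T 5 (2*k+2)
        - 2*c*((4:ℕ):ℝ)*(((2*k:ℕ):ℝ)+2) * lineInt x y T 3 (2*k+4)
        + (((2*k:ℕ):ℝ)+2)*(((2*k:ℕ):ℝ)+4) * lineInt x y T 5 (2*k)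
        + ((4:ℕ):ℝ)*(((2*k:ℕ):ℝ)+4) * lineInt x y T 3 (2*k+2) = 0 :=
      Bhat hx hy hper hH 4 (2*k)
    have hC : lineInt x y T 5 (2*k) + (-1) * lineInt x y T 3 (2*k+2)
        + a * lineInt x y T 7 (2*k) + c * lineInt x y T 3 (2*k+4)
        + b * lineInt x y T 5 (2*k+2) + (-hh) * lineInt x y T 3 (2*k) = 0 :=
      rawCx (T := T) hx hy hH 3 (2*k)
    have hC2 : lineInt x y T 3 (2*k+2) + (-1) * lineInt x y T 1 (2*k+4)
        + a * lineInt x y T 5 (2*k+2) + c * lineInt x y T 1 (2*k+6)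
        + b * lineInt x y T 3 (2*k+4) + (-hh) * lineInt x y T 1 (2*k+2) = 0 :=
      rawCx (T := T) hx hy hH 1 (2*k+2)
    have hC' : a*(((2:ℕ):ℝ)+4)*(((2*k+1:ℕ):ℝ)+3)*(((2*k+1:ℕ):ℝ)+5) * lineInt x y T 5 (2*k+2)
        + b*(((2:ℕ):ℝ)+2)*(((2*k+1:ℕ):ℝ)+1)*(((2*k+1:ℕ):ℝ)+5) * lineInt x y T 3 (2*k+4)
        + c*((2:ℕ):ℝ)*(((2*k+1:ℕ):ℝ)+1)*(((2*k+1:ℕ):ℝ)+3) * lineInt x y T 1 (2*k+6)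
        - hh*((2:ℕ):ℝ)*(((2*k+1:ℕ):ℝ)+3)*(((2*k+1:ℕ):ℝ)+5) * lineInt x y T 1 (2*k+2)
        + (((2:ℕ):ℝ)+2)*(((2*k+1:ℕ):ℝ)+3)*(((2*k+1:ℕ):ℝ)+5) * lineInt x y T 3 (2*k+2)
        - ((2:ℕ):ℝ)*(((2*k+1:ℕ):ℝ)+1)*(((2*k+1:ℕ):ℝ)+5) * lineInt x y T 1 (2*k+4) = 0 :=
      Chat hx hy hper hH 2 (2*k+1)
    push_cast at hB hC'
    have key : (2*a*(2*(k:ℝ)+2)*(2*(k:ℝ)+4)*(2*(k:ℝ)+8)^2*(4*a*c-b^2)) * lineInt x y T 5 (2*k+2) =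
        ((1024*a*c +1792*(k:ℝ)*a*c +896*(k:ℝ)^2*a*c +128*(k:ℝ)^3*a*c)) * hh * lineInt x y T 1 (2*k+2)
        +
        ((256*a*c +576*(k:ℝ)*a*c +384*(k:ℝ)^2*a*c +64*(k:ℝ)^3*a*c)) * lineInt x y T 1 (2*k+4)
        +
        ((-512*a*b -1408*(k:ℝ)*a*b -1344*(k:ℝ)^2*a*b -512*(k:ℝ)^3*a*b -64*(k:ℝ)^4*a*b)) * hh * lineInt x y T 3 (2*k)
        +
        ((-2560*a*c -1024*a*b -4992*(k:ℝ)*a*c -2304*(k:ℝ)*a*b -3136*(k:ℝ)^2*a*c -1792*(k:ℝ)^2*a*b -768*(k:ℝ)^3*a*c -576*(k:ℝ)^3*a*b -64*(k:ℝ)^4*a*c -64*(k:ℝ)^4*a*b)) * lineInt x y T 3 (2*k+2)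
        +
        ((256*a*b +704*(k:ℝ)*a*b +672*(k:ℝ)^2*a*b +256*(k:ℝ)^3*a*b +32*(k:ℝ)^4*a*b)) * lineInt x y T 5 (2*k)
        := by linear_combination (-(2*a*(2*(k:ℝ)+2)*(2*(k:ℝ)+8))*(2*b*(2*(k:ℝ)+2)*(2*(k:ℝ)+8)) + 8*(2*(k:ℝ)+2)*a*(2*b*(2*(k:ℝ)+2)*(2*(k:ℝ)+8))) * hC + (a*(2*b*(2*(k:ℝ)+2)*(2*(k:ℝ)+8))) * hB + (-c*(2*a*(2*(k:ℝ)+2)*(2*(k:ℝ)+8))*2*(2*(k:ℝ)+2)*(2*(k:ℝ)+4)) * hC2 + (c*(2*a*(2*(k:ℝ)+2)*(2*(k:ℝ)+8))) * hC'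
    simp only [Fin.sum_univ_five, Matrix.cons_val_zero, Matrix.cons_val_one, Matrix.head_cons,
      Matrix.cons_val_two, Matrix.tail_cons, Matrix.cons_val_three, Matrix.cons_val_four,
      Polynomial.eval_mul, Polynomial.eval_C, Polynomial.eval_X]
    generalize (2*a*(2*(k:ℝ)+2)*(2*(k:ℝ)+4)*(2*(k:ℝ)+8)^2*(4*a*c-b^2)) = D at hdet key ⊢
    field_simp
    linear_combination key

lemma redO2 (k : ℕ) (ha : a ≠ 0) (hc : c ≠ 0) (hdd : 4*a*c - b^2 ≠ 0)
    (IH2 : ∀ i j, i + j = 2*k+5 → RedD a b c ((2*k+4)/4) (((2*k+2)/4 : ℕ):WithBot ℕ) i j)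
    (IH4 : ∀ i j, i + j = 2*k+3 → RedD a b c ((2*k+2)/4) ((((2*k)/4) : ℕ):WithBot ℕ) i j) :
    RedD a b c ((2*k+6)/4) (((2*k+4)/4 : ℕ):WithBot ℕ) 3 (2*k+4) := by
  have hdet : (2*a*(2*(k:ℝ)+2)*(2*(k:ℝ)+4)*(2*(k:ℝ)+8)^2*(4*a*c-b^2)) ≠ 0 := by
    have h1 : (2*(k:ℝ)+2) ≠ 0 := by positivity
    have h2 : (2*(k:ℝ)+4) ≠ 0 := by positivity
    have h3 : ((2*(k:ℝ)+8)^2) ≠ 0 := by positivity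
    have h4 : 4*a*c-b^2 ≠ 0 := fun hz => hdd (by linarith)
    exact mul_ne_zero (mul_ne_zero (mul_ne_zero (mul_ne_zero (by simpa using ha) h1) h2) h3) h4
  refine redD_comb ![1, 1, 3, 3, 5] ![2*k+2, 2*k+4, 2*k, 2*k+2, 2*k]
    ![(2*k+2)/4, (2*k+4)/4, (2*k+2)/4, (2*k+4)/4, (2*k+4)/4] ![1, 0, 1, 0, 0]
    ![((((2*k)/4) : ℕ):WithBot ℕ), (((2*k+2)/4 : ℕ):WithBot ℕ), ((((2*k)/4) : ℕ):WithBot ℕ), (((2*k+2)/4 : ℕ):WithBot ℕ), (((2*k+2)/4 : ℕ):WithBot ℕ)]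
    ![Polynomial.C (((-1024*a*b -1280*(k:ℝ)*a*b -512*(k:ℝ)^2*a*b -64*(k:ℝ)^3*a*b))/(2*a*(2*(k:ℝ)+2)*(2*(k:ℝ)+4)*(2*(k:ℝ)+8)^2*(4*a*c-b^2))) * Polynomial.X,
      Polynomial.C (((-256*a*b -448*(k:ℝ)*a*b -224*(k:ℝ)^2*a*b -32*(k:ℝ)^3*a*b))/(2*a*(2*(k:ℝ)+2)*(2*(k:ℝ)+4)*(2*(k:ℝ)+8)^2*(4*a*c-b^2))),
      Polynomial.C (((2048*a^2 +4608*(k:ℝ)*a^2 +3584*(k:ℝ)^2*a^2 +1152*(k:ℝ)^3*a^2 +128*(k:ℝ)^4*a^2))/(2*a*(2*(k:ℝ)+2)*(2*(k:ℝ)+4)*(2*(k:ℝ)+8)^2*(4*a*c-b^2))) * Polynomial.X,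
      Polynomial.C (((2560*a*b +4096*a^2 +3712*(k:ℝ)*a*b +7168*(k:ℝ)*a^2 +1920*(k:ℝ)^2*a*b +4608*(k:ℝ)^2*a^2 +416*(k:ℝ)^3*a*b +1280*(k:ℝ)^3*a^2 +32*(k:ℝ)^4*a*b +128*(k:ℝ)^4*a^2))/(2*a*(2*(k:ℝ)+2)*(2*(k:ℝ)+4)*(2*(k:ℝ)+8)^2*(4*a*c-b^2))),
      Polynomial.C (((-1024*a^2 -2304*(k:ℝ)*a^2 -1792*(k:ℝ)^2*a^2 -576*(k:ℝ)^3*a^2 -64*(k:ℝ)^4*a^2))/(2*a*(2*(k:ℝ)+2)*(2*(k:ℝ)+4)*(2*(k:ℝ)+8)^2*(4*a*c-b^2)))]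
    ?_ ?_ ?_ ?_ ?_
  · intro m; fin_cases m
    · exact IH4 1 (2*k+2) (by omega)
    · exact IH2 1 (2*k+4) (by omega)
    · exact IH4 3 (2*k) (by omega)
    · exact IH2 3 (2*k+2) (by omega)
    · exact IH2 5 (2*k) (by omega)
  · intro m; fin_cases m
    · exact degCXle _
    · exact degCle _
    · exact degCXle _
    · exact degCle _
    · exact degCle _
  · intro m; fin_cases m
    · exact (show (1:ℕ) + (2*k+2)/4 ≤ (2*k+6)/4 by omega)
    · exact (show (0:ℕ) + (2*k+4)/4 ≤ (2*k+6)/4 by omega)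
    · exact (show (1:ℕ) + (2*k+2)/4 ≤ (2*k+6)/4 by omega)
    · exact (show (0:ℕ) + (2*k+4)/4 ≤ (2*k+6)/4 by omega)
    · exact (show (0:ℕ) + (2*k+4)/4 ≤ (2*k+6)/4 by omega)
  · intro m; fin_cases m
    · exact wble (show (1:ℕ) + (2*k)/4 ≤ (2*k+4)/4 by omega)
    · exact wble (show (0:ℕ) + (2*k+2)/4 ≤ (2*k+4)/4 by omega)
    · exact wble (show (1:ℕ) + (2*k)/4 ≤ (2*k+4)/4 by omega)
    · exact wble (show (0:ℕ) + (2*k+2)/4 ≤ (2*k+4)/4 by omega)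
    · exact wble (show (0:ℕ) + (2*k+2)/4 ≤ (2*k+4)/4 by omega)
  · rintro hh x y T ⟨hT, hx, hy, hper, hH⟩
    have hB : 2*a*(((2*k:ℕ):ℝ)+2)*(((2*k:ℕ):ℝ)+4) * lineInt x y T 7 (2*k)
        + b*(((2*k:ℕ):ℝ)+4)*(((2*k:ℕ):ℝ)-((4:ℕ):ℝ)) * lineInt x y T 5 (2*k+2)
        - 2*c*((4:ℕ):ℝ)*(((2*k:ℕ):ℝ)+2) * lineInt x y T 3 (2*k+4)
        + (((2*k:ℕ):ℝ)+2)*(((2*k:ℕ):ℝ)+4) * lineInt x y T 5 (2*k)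
        + ((4:ℕ):ℝ)*(((2*k:ℕ):ℝ)+4) * lineInt x y T 3 (2*k+2) = 0 :=
      Bhat hx hy hper hH 4 (2*k)
    have hC : lineInt x y T 5 (2*k) + (-1) * lineInt x y T 3 (2*k+2)
        + a * lineInt x y T 7 (2*k) + c * lineInt x y T 3 (2*k+4)
        + b * lineInt x y T 5 (2*k+2) + (-hh) * lineInt x y T 3 (2*k) = 0 :=
      rawCx (T := T) hx hy hH 3 (2*k)
    have hC2 : lineInt x y T 3 (2*k+2) + (-1) * lineInt x y T 1 (2*k+4)
        + a * lineInt x y T 5 (2*k+2) + c * lineInt x y T 1 (2*k+6)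
        + b * lineInt x y T 3 (2*k+4) + (-hh) * lineInt x y T 1 (2*k+2) = 0 :=
      rawCx (T := T) hx hy hH 1 (2*k+2)
    have hC' : a*(((2:ℕ):ℝ)+4)*(((2*k+1:ℕ):ℝ)+3)*(((2*k+1:ℕ):ℝ)+5) * lineInt x y T 5 (2*k+2)
        + b*(((2:ℕ):ℝ)+2)*(((2*k+1:ℕ):ℝ)+1)*(((2*k+1:ℕ):ℝ)+5) * lineInt x y T 3 (2*k+4)
        + c*((2:ℕ):ℝ)*(((2*k+1:ℕ):ℝ)+1)*(((2*k+1:ℕ):ℝ)+3) * lineInt x y T 1 (2*k+6)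
        - hh*((2:ℕ):ℝ)*(((2*k+1:ℕ):ℝ)+3)*(((2*k+1:ℕ):ℝ)+5) * lineInt x y T 1 (2*k+2)
        + (((2:ℕ):ℝ)+2)*(((2*k+1:ℕ):ℝ)+3)*(((2*k+1:ℕ):ℝ)+5) * lineInt x y T 3 (2*k+2)
        - ((2:ℕ):ℝ)*(((2*k+1:ℕ):ℝ)+1)*(((2*k+1:ℕ):ℝ)+5) * lineInt x y T 1 (2*k+4) = 0 :=
      Chat hx hy hper hH 2 (2*k+1)
    push_cast at hB hC'
    have key : (2*a*(2*(k:ℝ)+2)*(2*(k:ℝ)+4)*(2*(k:ℝ)+8)^2*(4*a*c-b^2)) * lineInt x y T 3 (2*k+4) =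
        ((-1024*a*b -1280*(k:ℝ)*a*b -512*(k:ℝ)^2*a*b -64*(k:ℝ)^3*a*b)) * hh * lineInt x y T 1 (2*k+2)
        +
        ((-256*a*b -448*(k:ℝ)*a*b -224*(k:ℝ)^2*a*b -32*(k:ℝ)^3*a*b)) * lineInt x y T 1 (2*k+4)
        +
        ((2048*a^2 +4608*(k:ℝ)*a^2 +3584*(k:ℝ)^2*a^2 +1152*(k:ℝ)^3*a^2 +128*(k:ℝ)^4*a^2)) * hh * lineInt x y T 3 (2*k)
        +
        ((2560*a*b +4096*a^2 +3712*(k:ℝ)*a*b +7168*(k:ℝ)*a^2 +1920*(k:ℝ)^2*a*b +4608*(k:ℝ)^2*a^2 +416*(k:ℝ)^3*a*b +1280*(k:ℝ)^3*a^2 +32*(k:ℝ)^4*a*b +128*(k:ℝ)^4*a^2)) * lineInt x y T 3 (2*k+2)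
        +
        ((-1024*a^2 -2304*(k:ℝ)*a^2 -1792*(k:ℝ)^2*a^2 -576*(k:ℝ)^3*a^2 -64*(k:ℝ)^4*a^2)) * lineInt x y T 5 (2*k)
        := by linear_combination ((2*a*(2*(k:ℝ)+2)*(2*(k:ℝ)+8))*(4*a*(2*(k:ℝ)+4)*(2*(k:ℝ)+8)) - 8*(2*(k:ℝ)+2)*a*(4*a*(2*(k:ℝ)+4)*(2*(k:ℝ)+8))) * hC + (-a*(4*a*(2*(k:ℝ)+4)*(2*(k:ℝ)+8))) * hB + (-(a*(b*(2*(k:ℝ))*(2*(k:ℝ)+8))-b*(2*a*(2*(k:ℝ)+2)*(2*(k:ℝ)+8)))*2*(2*(k:ℝ)+2)*(2*(k:ℝ)+4)) * hC2 + ((a*(b*(2*(k:ℝ))*(2*(k:ℝ)+8))-b*(2*a*(2*(k:ℝ)+2)*(2*(k:ℝ)+8)))) * hC'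
    simp only [Fin.sum_univ_five, Matrix.cons_val_zero, Matrix.cons_val_one, Matrix.head_cons,
      Matrix.cons_val_two, Matrix.tail_cons, Matrix.cons_val_three, Matrix.cons_val_four,
      Polynomial.eval_mul, Polynomial.eval_C, Polynomial.eval_X]
    generalize (2*a*(2*(k:ℝ)+2)*(2*(k:ℝ)+4)*(2*(k:ℝ)+8)^2*(4*a*c-b^2)) = D at hdet key ⊢
    field_simp
    linear_combination key

end Tails
section Steps
variable {a b c : ℝ}


lemma comb4 {D u u1 u2 u3 u4 e1 e2 e3 e4 hh : ℝ} (hD : D ≠ 0)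
    (key : D * u = e1*u1 + e2*u2 + e3*u3 + e4*hh*u4) :
    u = e1/D * u1 + e2/D * u2 + e3/D * u3 + e4/D * hh * u4 := by
  field_simp
  linear_combination key

lemma comb5h {D u u1 u2 u3 u4 u5 e1 e2 e3 e4 e5 hh : ℝ} (hD : D ≠ 0)
    (key : D * u = e1*u1 + e2*u2 + e3*u3 + e4*u4 + e5*hh*u5) :
    u = e1/D * u1 + e2/D * u2 + e3/D * u3 + e4/D * u4 + e5/D * hh * u5 := by
  field_simp
  linear_combination key

lemma red14 (ha : a ≠ 0) (hdd : 4*a*c - b^2 ≠ 0) : RedD a b c 1 ((0:ℕ) : WithBot ℕ) 1 4 := by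
  have hd : 48*a*c - 12*b^2 ≠ 0 := fun hz => hdd (by linarith)
  refine redD_comb ![1,0,0,0,0] ![2,3,3,3,3] ![0,0,0,0,0] ![0,0,0,0,0]
    ![((0:ℕ):WithBot ℕ),((0:ℕ):WithBot ℕ),((0:ℕ):WithBot ℕ),((0:ℕ):WithBot ℕ),((0:ℕ):WithBot ℕ)]
    ![Polynomial.C ((48*a+24*b)/(48*a*c-12*b^2)), 0, 0, 0, 0] ?_ ?_ ?_ ?_ ?_
  · intro m; fin_cases m
    · exact red12
    · exact red03
    · exact red03
    · exact red03
    · exact red03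
  · intro m; fin_cases m <;> simp [Polynomial.degree_C_le]
  · intro m; fin_cases m <;> simp
  · intro m; fin_cases m <;> simp
  · rintro hh x y T ⟨hT, hx, hy, hper, hH⟩
    simp only [Fin.sum_univ_five, Matrix.cons_val_zero, Matrix.cons_val_one, Matrix.head_cons,
      Matrix.cons_val_two, Matrix.tail_cons, Matrix.cons_val_three, Matrix.cons_val_four,
      Polynomial.eval_C, Polynomial.eval_zero, zero_mul, add_zero]
    have hB : 2*a*(((2:ℕ):ℝ)+2)*(((2:ℕ):ℝ)+4) * lineInt x y T 3 2
        + b*(((2:ℕ):ℝ)+4)*(((2:ℕ):ℝ)-((0:ℕ):ℝ)) * lineInt x y T 1 4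
        - 2*c*((0:ℕ):ℝ)*(((2:ℕ):ℝ)+2) * lineInt x y T 0 6
        + (((2:ℕ):ℝ)+2)*(((2:ℕ):ℝ)+4) * lineInt x y T 1 2
        + ((0:ℕ):ℝ)*(((2:ℕ):ℝ)+4) * lineInt x y T 0 4 = 0 := Bhat hx hy hper hH 0 2
    have hC := rawCx (T := T) hx hy hH 1 0
    have z1 : lineInt x y T 5 0 = 0 := Jzero hx hy hper 5
    have z2 : lineInt x y T 3 0 = 0 := Jzero hx hy hper 3
    have z3 : lineInt x y T 1 0 = 0 := Jzero hx hy hper 1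
    push_cast at hB
    rw [div_mul_eq_mul_div, eq_div_iff hd]
    linear_combination 48*a*hC - b*hB - 48*a*z2 - 48*a^2*z1 + 48*a*hh*z3

lemma red41 (ha : a ≠ 0) (hc : c ≠ 0) : RedD a b c 1 ((0:ℕ) : WithBot ℕ) 4 1 := by
  have hd : (36:ℝ)*a ≠ 0 := by
    intro hz
    rcases mul_eq_zero.mp hz with h36 | h36
    · norm_num at h36
    · exact ha h36
  refine redD_comb ![2,2,0,0,0] ![3,1,3,3,1] ![1,0,0,0,0] ![0,0,0,0,1]
    ![(⊥:WithBot ℕ),((0:ℕ):WithBot ℕ),((0:ℕ):WithBot ℕ),((0:ℕ):WithBot ℕ),(⊥:WithBot ℕ)]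
    ![Polynomial.C ((-6*b)/(36*a)), Polynomial.C ((-21:ℝ)/(36*a)),
      Polynomial.C (1/(36*a)), 0, Polynomial.C (6/(36*a)) * Polynomial.X] ?_ ?_ ?_ ?_ ?_
  · intro m; fin_cases m
    · exact red23
    · exact red21
    · exact red03
    · exact red03
    · exact red01
  · intro m; fin_cases m
    · exact degCle _
    · exact degCle _
    · exact degCle _
    · simp
    · exact degCXle _
  · intro m; fin_cases m
    · exact (show (0:ℕ) + 1 ≤ 1 by omega)
    · exact (show (0:ℕ) + 0 ≤ 1 by omega)
    · exact (show (0:ℕ) + 0 ≤ 1 by omega)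
    · exact (show (0:ℕ) + 0 ≤ 1 by omega)
    · exact (show (1:ℕ) + 0 ≤ 1 by omega)
  · intro m; fin_cases m
    · exact (show ((0:ℕ):WithBot ℕ) + ⊥ ≤ ((0:ℕ):WithBot ℕ) by simp)
    · exact wble (show (0:ℕ) + 0 ≤ 0 by omega)
    · exact wble (show (0:ℕ) + 0 ≤ 0 by omega)
    · exact wble (show (0:ℕ) + 0 ≤ 0 by omega)
    · exact (show ((1:ℕ):WithBot ℕ) + ⊥ ≤ ((0:ℕ):WithBot ℕ) by simp)
  · rintro hh x y T ⟨hT, hx, hy, hper, hH⟩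
    simp only [Fin.sum_univ_five, Matrix.cons_val_zero, Matrix.cons_val_one, Matrix.head_cons,
      Matrix.cons_val_two, Matrix.tail_cons, Matrix.cons_val_three, Matrix.cons_val_four,
      Polynomial.eval_C, Polynomial.eval_zero, Polynomial.eval_mul, Polynomial.eval_X,
      zero_mul, add_zero]
    have hB : 2*a*(((1:ℕ):ℝ)+2)*(((1:ℕ):ℝ)+4) * lineInt x y T 4 1
        + b*(((1:ℕ):ℝ)+4)*(((1:ℕ):ℝ)-((1:ℕ):ℝ)) * lineInt x y T 2 3
        - 2*c*((1:ℕ):ℝ)*(((1:ℕ):ℝ)+2) * lineInt x y T 0 5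
        + (((1:ℕ):ℝ)+2)*(((1:ℕ):ℝ)+4) * lineInt x y T 2 1
        + ((1:ℕ):ℝ)*(((1:ℕ):ℝ)+4) * lineInt x y T 0 3 = 0 := Bhat hx hy hper hH 1 1
    have hC := rawCx (T := T) hx hy hH 0 1
    push_cast at hB
    have key : (36*a) * lineInt x y T 4 1 = (-6*b)*lineInt x y T 2 3
        + (-21:ℝ)*lineInt x y T 2 1 + 1*lineInt x y T 0 3 + 6*hh*lineInt x y T 0 1 := by
      linear_combination hB + 6*hC
    exact comb4 hd key

lemma red05 (ha : a ≠ 0) (hc : c ≠ 0) : RedD a b c 1 ((0:ℕ) : WithBot ℕ) 0 5 := by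
  have hd : (36:ℝ)*c ≠ 0 := by
    intro hz
    rcases mul_eq_zero.mp hz with h36 | h36
    · norm_num at h36
    · exact hc h36
  refine redD_comb ![2,2,0,0,0] ![3,1,3,3,1] ![1,0,0,0,0] ![0,0,0,0,1]
    ![(⊥:WithBot ℕ),((0:ℕ):WithBot ℕ),((0:ℕ):WithBot ℕ),((0:ℕ):WithBot ℕ),(⊥:WithBot ℕ)]
    ![Polynomial.C ((-30*b)/(36*c)), Polynomial.C ((-15:ℝ)/(36*c)),
      Polynomial.C (35/(36*c)), 0, Polynomial.C (30/(36*c)) * Polynomial.X] ?_ ?_ ?_ ?_ ?_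
  · intro m; fin_cases m
    · exact red23
    · exact red21
    · exact red03
    · exact red03
    · exact red01
  · intro m; fin_cases m
    · exact degCle _
    · exact degCle _
    · exact degCle _
    · simp
    · exact degCXle _
  · intro m; fin_cases m
    · exact (show (0:ℕ) + 1 ≤ 1 by omega)
    · exact (show (0:ℕ) + 0 ≤ 1 by omega)
    · exact (show (0:ℕ) + 0 ≤ 1 by omega)
    · exact (show (0:ℕ) + 0 ≤ 1 by omega)
    · exact (show (1:ℕ) + 0 ≤ 1 by omega)
  · intro m; fin_cases m
    · exact (show ((0:ℕ):WithBot ℕ) + ⊥ ≤ ((0:ℕ):WithBot ℕ) by simp)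
    · exact wble (show (0:ℕ) + 0 ≤ 0 by omega)
    · exact wble (show (0:ℕ) + 0 ≤ 0 by omega)
    · exact wble (show (0:ℕ) + 0 ≤ 0 by omega)
    · exact (show ((1:ℕ):WithBot ℕ) + ⊥ ≤ ((0:ℕ):WithBot ℕ) by simp)
  · rintro hh x y T ⟨hT, hx, hy, hper, hH⟩
    simp only [Fin.sum_univ_five, Matrix.cons_val_zero, Matrix.cons_val_one, Matrix.head_cons,
      Matrix.cons_val_two, Matrix.tail_cons, Matrix.cons_val_three, Matrix.cons_val_four,
      Polynomial.eval_C, Polynomial.eval_zero, Polynomial.eval_mul, Polynomial.eval_X,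
      zero_mul, add_zero]
    have hB : 2*a*(((1:ℕ):ℝ)+2)*(((1:ℕ):ℝ)+4) * lineInt x y T 4 1
        + b*(((1:ℕ):ℝ)+4)*(((1:ℕ):ℝ)-((1:ℕ):ℝ)) * lineInt x y T 2 3
        - 2*c*((1:ℕ):ℝ)*(((1:ℕ):ℝ)+2) * lineInt x y T 0 5
        + (((1:ℕ):ℝ)+2)*(((1:ℕ):ℝ)+4) * lineInt x y T 2 1
        + ((1:ℕ):ℝ)*(((1:ℕ):ℝ)+4) * lineInt x y T 0 3 = 0 := Bhat hx hy hper hH 1 1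
    have hC := rawCx (T := T) hx hy hH 0 1
    push_cast at hB
    have key : (36*c) * lineInt x y T 0 5 = (-30*b)*lineInt x y T 2 3
        + (-15:ℝ)*lineInt x y T 2 1 + 35*lineInt x y T 0 3 + 30*hh*lineInt x y T 0 1 := by
      linear_combination -(hB) + 30*hC
    exact comb4 hd key

lemma stepC {D1 E1 F1 : ℕ} {D2 E2 F2 : WithBot ℕ} (m j : ℕ) (ha : a ≠ 0)
    (h20 : RedD a b c E1 E2 (m+2) j) (h02 : RedD a b c E1 E2 m (j+2))
    (hs4 : RedD a b c D1 D2 m (j+4)) (hs2 : RedD a b c D1 D2 (m+2) (j+2))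
    (h4 : RedD a b c F1 F2 m j)
    (hE1 : E1 ≤ D1) (hE2 : E2 ≤ D2) (hF1 : F1 + 1 ≤ D1)
    (hF2 : ((1:ℕ):WithBot ℕ) + F2 ≤ D2) :
    RedD a b c D1 D2 (m+4) j := by
  refine redD_comb ![m+2, m, m, m+2, m] ![j, j+2, j+4, j+2, j]
    ![E1, E1, D1, D1, F1] ![0,0,0,0,1] ![E2, E2, D2, D2, F2]
    ![Polynomial.C (((-1):ℝ)/a), Polynomial.C (1/a), Polynomial.C ((-c)/a),
      Polynomial.C ((-b)/a), Polynomial.C (1/a) * Polynomial.X] ?_ ?_ ?_ ?_ ?_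
  · intro m'; fin_cases m'
    · exact h20
    · exact h02
    · exact hs4
    · exact hs2
    · exact h4
  · intro m'; fin_cases m'
    · exact degCle _
    · exact degCle _
    · exact degCle _
    · exact degCle _
    · exact degCXle _
  · intro m'; fin_cases m'
    · exact (show (0:ℕ) + E1 ≤ D1 by omega)
    · exact (show (0:ℕ) + E1 ≤ D1 by omega)
    · exact (show (0:ℕ) + D1 ≤ D1 by omega)
    · exact (show (0:ℕ) + D1 ≤ D1 by omega)
    · exact (show (1:ℕ) + F1 ≤ D1 by omega)
  · intro m'; fin_cases m'
    · exact (show ((0:ℕ):WithBot ℕ) + E2 ≤ D2 by simpa using hE2)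
    · exact (show ((0:ℕ):WithBot ℕ) + E2 ≤ D2 by simpa using hE2)
    · exact (show ((0:ℕ):WithBot ℕ) + D2 ≤ D2 by simp)
    · exact (show ((0:ℕ):WithBot ℕ) + D2 ≤ D2 by simp)
    · exact (show ((1:ℕ):WithBot ℕ) + F2 ≤ D2 from hF2)
  · rintro hh x y T ⟨hT, hx, hy, hper, hH⟩
    simp only [Fin.sum_univ_five, Matrix.cons_val_zero, Matrix.cons_val_one, Matrix.head_cons,
      Matrix.cons_val_two, Matrix.tail_cons, Matrix.cons_val_three, Matrix.cons_val_four,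
      Polynomial.eval_C, Polynomial.eval_mul, Polynomial.eval_X]
    have hC := rawCx (T := T) hx hy hH m j
    have key : a * lineInt x y T (m+4) j = ((-1):ℝ)*lineInt x y T (m+2) j
        + 1*lineInt x y T m (j+2) + (-c)*lineInt x y T m (j+4)
        + (-b)*lineInt x y T (m+2) (j+2) + 1*hh*lineInt x y T m j := by
      linear_combination hC
    exact comb5h ha key

lemma stepCc {D1 E1 F1 : ℕ} {D2 E2 F2 : WithBot ℕ} (m j : ℕ) (hc : c ≠ 0)
    (h20 : RedD a b c E1 E2 (m+2) j) (h02 : RedD a b c E1 E2 m (j+2))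
    (hs4 : RedD a b c D1 D2 (m+4) j) (hs2 : RedD a b c D1 D2 (m+2) (j+2))
    (h4 : RedD a b c F1 F2 m j)
    (hE1 : E1 ≤ D1) (hE2 : E2 ≤ D2) (hF1 : F1 + 1 ≤ D1)
    (hF2 : ((1:ℕ):WithBot ℕ) + F2 ≤ D2) :
    RedD a b c D1 D2 m (j+4) := by
  refine redD_comb ![m+2, m, m+4, m+2, m] ![j, j+2, j, j+2, j]
    ![E1, E1, D1, D1, F1] ![0,0,0,0,1] ![E2, E2, D2, D2, F2]
    ![Polynomial.C (((-1):ℝ)/c), Polynomial.C (1/c), Polynomial.C ((-a)/c),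
      Polynomial.C ((-b)/c), Polynomial.C (1/c) * Polynomial.X] ?_ ?_ ?_ ?_ ?_
  · intro m'; fin_cases m'
    · exact h20
    · exact h02
    · exact hs4
    · exact hs2
    · exact h4
  · intro m'; fin_cases m'
    · exact degCle _
    · exact degCle _
    · exact degCle _
    · exact degCle _
    · exact degCXle _
  · intro m'; fin_cases m'
    · exact (show (0:ℕ) + E1 ≤ D1 by omega)
    · exact (show (0:ℕ) + E1 ≤ D1 by omega)
    · exact (show (0:ℕ) + D1 ≤ D1 by omega)
    · exact (show (0:ℕ) + D1 ≤ D1 by omega)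
    · exact (show (1:ℕ) + F1 ≤ D1 by omega)
  · intro m'; fin_cases m'
    · exact (show ((0:ℕ):WithBot ℕ) + E2 ≤ D2 by simpa using hE2)
    · exact (show ((0:ℕ):WithBot ℕ) + E2 ≤ D2 by simpa using hE2)
    · exact (show ((0:ℕ):WithBot ℕ) + D2 ≤ D2 by simp)
    · exact (show ((0:ℕ):WithBot ℕ) + D2 ≤ D2 by simp)
    · exact (show ((1:ℕ):WithBot ℕ) + F2 ≤ D2 from hF2)
  · rintro hh x y T ⟨hT, hx, hy, hper, hH⟩
    simp only [Fin.sum_univ_five, Matrix.cons_val_zero, Matrix.cons_val_one, Matrix.head_cons,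
      Matrix.cons_val_two, Matrix.tail_cons, Matrix.cons_val_three, Matrix.cons_val_four,
      Polynomial.eval_C, Polynomial.eval_mul, Polynomial.eval_X]
    have hC := rawCx (T := T) hx hy hH m j
    have key : c * lineInt x y T m (j+4) = ((-1):ℝ)*lineInt x y T (m+2) j
        + 1*lineInt x y T m (j+2) + (-a)*lineInt x y T (m+4) j
        + (-b)*lineInt x y T (m+2) (j+2) + 1*hh*lineInt x y T m j := by
      linear_combination hC
    exact comb5h hc key

end Steps
theorem redMain (a b c : ℝ) (ha : a ≠ 0) (hc : c ≠ 0) (hdd : 4*a*c - b^2 ≠ 0) :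
    ∀ n : ℕ, Odd n → ∀ i j : ℕ, i + j = n →
      RedD a b c ((n-1)/4) ((((n-3)/4) : ℕ) : WithBot ℕ) i j := by
  intro n
  induction n using Nat.strong_induction_on with
  | _ n IH =>
    intro hodd i j hij
    obtain ⟨t, ht⟩ := hodd
    by_cases h7 : n < 7
    · have hn : n = 1 ∨ n = 3 ∨ n = 5 := by omega
      rcases hn with rfl | rfl | rfl
      · -- n = 1
        have : i = 0 ∧ j = 1 ∨ i = 1 ∧ j = 0 := by omega
        rcases this with ⟨rfl, rfl⟩ | ⟨rfl, rfl⟩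
        · exact redD_mono red01 le_rfl bot_le
        · exact redD_zero (by rintro hh x y T ⟨hT, hx, hy, hper, hH⟩; exact Jzero hx hy hper 1)
      · -- n = 3
        have : i = 0 ∧ j = 3 ∨ i = 1 ∧ j = 2 ∨ i = 2 ∧ j = 1 ∨ i = 3 ∧ j = 0 := by omega
        rcases this with ⟨rfl, rfl⟩ | ⟨rfl, rfl⟩ | ⟨rfl, rfl⟩ | ⟨rfl, rfl⟩
        · exact redD_mono red03 le_rfl (by norm_num)
        · exact redD_mono red12 le_rfl (by norm_num)
        · exact redD_mono red21 le_rfl (by norm_num)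
        · exact redD_zero (by rintro hh x y T ⟨hT, hx, hy, hper, hH⟩; exact Jzero hx hy hper 3)
      · -- n = 5
        have : i = 0 ∧ j = 5 ∨ i = 1 ∧ j = 4 ∨ i = 2 ∧ j = 3 ∨ i = 3 ∧ j = 2
            ∨ i = 4 ∧ j = 1 ∨ i = 5 ∧ j = 0 := by omega
        rcases this with ⟨rfl, rfl⟩ | ⟨rfl, rfl⟩ | ⟨rfl, rfl⟩ | ⟨rfl, rfl⟩ | ⟨rfl, rfl⟩ | ⟨rfl, rfl⟩
        · exact redD_mono (red05 ha hc) le_rfl (by norm_num)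
        · exact redD_mono (red14 ha hdd) le_rfl (by norm_num)
        · exact redD_mono red23 le_rfl bot_le
        · exact redD_mono (red32 ha hdd) le_rfl (by norm_num)
        · exact redD_mono (red41 ha hc) le_rfl (by norm_num)
        · exact redD_zero (by rintro hh x y T ⟨hT, hx, hy, hper, hH⟩; exact Jzero hx hy hper 5)
    · -- n ≥ 7
      obtain ⟨k, rfl⟩ : ∃ k, n = 2*k+7 := ⟨(n-7)/2, by omega⟩
      have IH2 : ∀ i j, i + j = 2*k+5 →
          RedD a b c ((2*k+4)/4) (((2*k+2)/4 : ℕ):WithBot ℕ) i j := by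
        intro i j hij
        have := IH (2*k+5) (by omega) ⟨k+2, by omega⟩ i j hij
        simpa [show 2*k+5-1 = 2*k+4 from by omega, show 2*k+5-3 = 2*k+2 from by omega] using this
      have IH4 : ∀ i j, i + j = 2*k+3 →
          RedD a b c ((2*k+2)/4) ((((2*k)/4) : ℕ):WithBot ℕ) i j := by
        intro i j hij
        have := IH (2*k+3) (by omega) ⟨k+1, by omega⟩ i j hij
        simpa [show 2*k+3-1 = 2*k+2 from by omega, show 2*k+3-3 = 2*k from by omega] using this
      have hE1 : (2*k+4)/4 ≤ (2*k+6)/4 := by omega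
      have hE2 : (((2*k+2)/4 : ℕ):WithBot ℕ) ≤ (((2*k+4)/4 : ℕ):WithBot ℕ) := by
        exact_mod_cast (by omega : (2*k+2)/4 ≤ (2*k+4)/4)
      have hF1 : (2*k+2)/4 + 1 ≤ (2*k+6)/4 := by omega
      have hF2 : ((1:ℕ):WithBot ℕ) + (((2*k)/4 : ℕ):WithBot ℕ) ≤ (((2*k+4)/4 : ℕ):WithBot ℕ) :=
        wble (by omega)
      have inner : ∀ i j, i + j = 2*k+7 →
          RedD a b c ((2*k+6)/4) (((2*k+4)/4 : ℕ):WithBot ℕ) i j := by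
        intro i
        induction i using Nat.strong_induction_on with
        | _ i IHi =>
          intro j hij
          rcases lt_or_ge i 6 with hi | hi
          · interval_cases i
            · obtain rfl : j = 2*k+7 := by omega
              exact stepCc 0 (2*k+3) hc
                (IH2 2 (2*k+3) (by omega)) (IH2 0 (2*k+5) (by omega))
                (redE1 k ha hc hdd IH2 IH4) (redE2 k ha hc hdd IH2 IH4)
                (IH4 0 (2*k+3) (by omega)) hE1 hE2 hF1 hF2
            · obtain rfl : j = 2*k+6 := by omega
              exact stepCc 1 (2*k+2) hc
                (IH2 3 (2*k+2) (by omega)) (IH2 1 (2*k+4) (by omega))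
                (redO1 k ha hc hdd IH2 IH4) (redO2 k ha hc hdd IH2 IH4)
                (IH4 1 (2*k+2) (by omega)) hE1 hE2 hF1 hF2
            · obtain rfl : j = 2*k+5 := by omega
              exact redE2 k ha hc hdd IH2 IH4
            · obtain rfl : j = 2*k+4 := by omega
              exact redO2 k ha hc hdd IH2 IH4
            · obtain rfl : j = 2*k+3 := by omega
              exact redE1 k ha hc hdd IH2 IH4
            · obtain rfl : j = 2*k+2 := by omega
              exact redO1 k ha hc hdd IH2 IH4
          · obtain ⟨m, rfl⟩ : ∃ m, i = m+6 := ⟨i-6, by omega⟩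
            exact stepC (m+2) j ha
              (IH2 (m+4) j (by omega)) (IH2 (m+2) (j+2) (by omega))
              (IHi (m+2) (by omega) (j+4) (by omega))
              (IHi (m+4) (by omega) (j+2) (by omega))
              (IH4 (m+2) j (by omega)) hE1 hE2 hF1 hF2
      have := inner i j hij
      simpa [show 2*k+7-1 = 2*k+6 from by omega, show 2*k+7-3 = 2*k+4 from by omega] using this


theorem stmt4 (a b c : ℝ) (habc : a * c * (b ^ 2 - 4 * a * c) ≠ 0)
    (i j : ℕ) (hodd : Odd (i + j)) (hn : 5 ≤ i + j) :
    ∃ f1 f2 f3 f4 f5 : Polynomial ℝ,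
      f1.degree ≤ (((i + j - 1) / 4 : ℕ) : WithBot ℕ) ∧
      f2.degree ≤ (((i + j - 3) / 4 : ℕ) : WithBot ℕ) ∧
      f3.degree ≤ (((i + j - 3) / 4 : ℕ) : WithBot ℕ) ∧
      f5.degree ≤ (((i + j - 3) / 4 : ℕ) : WithBot ℕ) ∧
      f4.degree < (((i + j - 1) / 4 : ℕ) : WithBot ℕ) ∧
      ∀ (h : ℝ) (x y : ℝ → ℝ) (T : ℝ), 0 < T →
        ContDiff ℝ 1 x → ContDiff ℝ 1 y →
        (∀ t : ℝ, x (t + T) = x t ∧ y (t + T) = y t) →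
        (∀ t : ℝ, Hfun a b c (x t) (y t) = h) →
        lineInt x y T i j =
          f1.eval h * lineInt x y T 0 1 + f2.eval h * lineInt x y T 0 3
          + f3.eval h * lineInt x y T 2 1 + f4.eval h * lineInt x y T 2 3
          + f5.eval h * lineInt x y T 1 2 := by
  have ha : a ≠ 0 := by
    intro h; apply habc; rw [h]; ring
  have hc : c ≠ 0 := by
    intro h; apply habc; rw [h]; ring
  have hdd : 4*a*c - b^2 ≠ 0 := by
    intro h
    apply habc
    have : b ^ 2 - 4*a*c = 0 := by linarith
    rw [this, mul_zero]
  obtain ⟨f1, f2, f3, f4, f5, b1, b2, b3, b5, b4, hs⟩ :=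
    redMain a b c ha hc hdd (i+j) hodd i j rfl
  exact ⟨f1, f2, f3, f4, f5, b1, b2, b3, b5, b4,
    fun h x y T hT hx hy hper hH => hs h x y T ⟨hT, hx, hy, hper, hH⟩⟩
end

section
/- (Lemma 2.1, eq. (2.2)) Let a, b, c be real numbers with a·c·(b²−4ac) ≠ 0, and let p, q ≥ 0 be integers with p + q ≥ 2; set n := (2p+1) + (2q+1). Then there exist real polynomials ḡ₁, ḡ₂ with deg ḡ₁ ≤ ⌊(n−2)/4⌋ and deg ḡ₂ ≤ ⌊n/4⌋ − 1, such that for every h ∈ ℝ and every closed curve γ at level h of H: I_{2p+1,2q+1}(γ) = ḡ₁(h)·I_{1,1}(γ) + ḡ₂(h)·I_{1,3}(γ). -/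
structure Curve (a b c h : ℝ) where
  x : ℝ → ℝ
  y : ℝ → ℝ
  T : ℝ
  hT : 0 < T
  hx : ContDiff ℝ 1 x
  hy : ContDiff ℝ 1 y
  per : ∀ t : ℝ, x (t + T) = x t ∧ y (t + T) = y t
  lev : ∀ t : ℝ, Hfun a b c (x t) (y t) = h

namespace Curve

variable {a b c h : ℝ} (γ : Curve a b c h)

noncomputable def J (m n : ℕ) : ℝ :=
  ∫ t in (0:ℝ)..γ.T, γ.x t ^ m * γ.y t ^ n * deriv γ.x t

noncomputable def Jy (m n : ℕ) : ℝ :=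
  ∫ t in (0:ℝ)..γ.T, γ.x t ^ m * γ.y t ^ n * deriv γ.y t

lemma cx : Continuous γ.x := γ.hx.continuous
lemma cy : Continuous γ.y := γ.hy.continuous
lemma cdx : Continuous (deriv γ.x) := γ.hx.continuous_deriv le_rfl
lemma cdy : Continuous (deriv γ.y) := γ.hy.continuous_deriv le_rfl

lemma contJ (m n : ℕ) : Continuous (fun t => γ.x t ^ m * γ.y t ^ n * deriv γ.x t) :=
  ((γ.cx.pow m).mul (γ.cy.pow n)).mul γ.cdx
lemma contJy (m n : ℕ) : Continuous (fun t => γ.x t ^ m * γ.y t ^ n * deriv γ.y t) :=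
  ((γ.cx.pow m).mul (γ.cy.pow n)).mul γ.cdy

lemma hdx (t : ℝ) : HasDerivAt γ.x (deriv γ.x t) t :=
  ((γ.hx.differentiable one_ne_zero) t).hasDerivAt
lemma hdy (t : ℝ) : HasDerivAt γ.y (deriv γ.y t) t :=
  ((γ.hy.differentiable one_ne_zero) t).hasDerivAt

lemma relA (m n : ℕ) :
    ((m:ℝ)+1) * γ.J m (n+1) + ((n:ℝ)+1) * γ.Jy (m+1) n = 0 := by
  have key : ∫ t in (0:ℝ)..γ.T,
      (((m:ℝ)+1) * (γ.x t ^ m * γ.y t ^ (n+1) * deriv γ.x t)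
        + ((n:ℝ)+1) * (γ.x t ^ (m+1) * γ.y t ^ n * deriv γ.y t)) = 0 := by
    have hder : ∀ t ∈ Set.uIcc (0:ℝ) γ.T,
        HasDerivAt (fun t => γ.x t ^ (m+1) * γ.y t ^ (n+1))
          (((m:ℝ)+1) * (γ.x t ^ m * γ.y t ^ (n+1) * deriv γ.x t)
            + ((n:ℝ)+1) * (γ.x t ^ (m+1) * γ.y t ^ n * deriv γ.y t)) t := by
      intro t _
      have h1 := ((γ.hdx t).fun_pow (m+1)).fun_mul ((γ.hdy t).fun_pow (n+1))
      refine h1.congr_deriv ?_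
      push_cast [Nat.add_sub_cancel]
      ring
    have hint : IntervalIntegrable (fun t =>
        ((m:ℝ)+1) * (γ.x t ^ m * γ.y t ^ (n+1) * deriv γ.x t)
          + ((n:ℝ)+1) * (γ.x t ^ (m+1) * γ.y t ^ n * deriv γ.y t)) MeasureTheory.volume 0 γ.T := by
      exact (((continuous_const.mul (γ.contJ m (n+1))).add
        (continuous_const.mul (γ.contJy (m+1) n)))).intervalIntegrable _ _
    rw [intervalIntegral.integral_eq_sub_of_hasDerivAt hder hint]
    have hx0 : γ.x γ.T = γ.x 0 := by simpa using (γ.per 0).1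
    have hy0 : γ.y γ.T = γ.y 0 := by simpa using (γ.per 0).2
    rw [hx0, hy0]; ring
  rw [J, Jy, ← intervalIntegral.integral_const_mul, ← intervalIntegral.integral_const_mul,
    ← intervalIntegral.integral_add]
  · exact key
  · exact (continuous_const.mul (γ.contJ m (n+1))).intervalIntegrable _ _
  · exact (continuous_const.mul (γ.contJy (m+1) n)).intervalIntegrable _ _

lemma jy0 (n : ℕ) : γ.Jy 0 (n+1) = 0 := by
  have key : ∫ t in (0:ℝ)..γ.T,
      ((n:ℝ)+2) * (γ.x t ^ 0 * γ.y t ^ (n+1) * deriv γ.y t) = 0 := by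
    have hder : ∀ t ∈ Set.uIcc (0:ℝ) γ.T,
        HasDerivAt (fun t => γ.y t ^ (n+2))
          (((n:ℝ)+2) * (γ.x t ^ 0 * γ.y t ^ (n+1) * deriv γ.y t)) t := by
      intro t _
      have h1 := (γ.hdy t).fun_pow (n+2)
      refine h1.congr_deriv ?_
      push_cast [Nat.add_sub_cancel]
      ring
    have hint : IntervalIntegrable (fun t =>
        ((n:ℝ)+2) * (γ.x t ^ 0 * γ.y t ^ (n+1) * deriv γ.y t)) MeasureTheory.volume 0 γ.T :=
      (continuous_const.mul (γ.contJy 0 (n+1))).intervalIntegrable _ _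
    rw [intervalIntegral.integral_eq_sub_of_hasDerivAt hder hint]
    have hy0 : γ.y γ.T = γ.y 0 := by simpa using (γ.per 0).2
    rw [hy0]; ring
  rw [intervalIntegral.integral_const_mul] at key
  have hn : ((n:ℝ)+2) ≠ 0 := by positivity
  have := mul_eq_zero.mp key
  rcases this with h' | h'
  · exact absurd h' hn
  · exact h'

lemma dH0 (t : ℝ) :
    (2*γ.x t + 4*a*γ.x t^3 + 2*b*γ.x t*γ.y t^2) * deriv γ.x t
      + (-2*γ.y t + 4*c*γ.y t^3 + 2*b*γ.x t^2*γ.y t) * deriv γ.y t = 0 := by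
  set Dx := deriv γ.x t
  set Dy := deriv γ.y t
  have H1 : HasDerivAt (fun s => Hfun a b c (γ.x s) (γ.y s))
      ((2*γ.x t + 4*a*γ.x t^3 + 2*b*γ.x t*γ.y t^2) * Dx
        + (-2*γ.y t + 4*c*γ.y t^3 + 2*b*γ.x t^2*γ.y t) * Dy) t := by
    unfold Hfun
    have hx2 := (γ.hdx t).fun_pow 2
    have hy2 := (γ.hdy t).fun_pow 2
    have hx4 := (γ.hdx t).fun_pow 4
    have hy4 := (γ.hdy t).fun_pow 4
    have h2 := (((hx2.fun_sub hy2).fun_add (hx4.const_mul a)).fun_add (hy4.const_mul c)).fun_add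
      ((hx2.const_mul b).fun_mul hy2)
    refine h2.congr_deriv ?_
    push_cast
    norm_num
    ring
  have H2 : HasDerivAt (fun _ : ℝ => h)
      ((2*γ.x t + 4*a*γ.x t^3 + 2*b*γ.x t*γ.y t^2) * Dx
        + (-2*γ.y t + 4*c*γ.y t^3 + 2*b*γ.x t^2*γ.y t) * Dy) t := by
    have : (fun s => Hfun a b c (γ.x s) (γ.y s)) = fun _ : ℝ => h := funext γ.lev
    rwa [this] at H1
  exact H2.unique (hasDerivAt_const t h)

lemma relB (m n : ℕ) :
    2 * γ.J (m+1) n + 4*a*γ.J (m+3) n + 2*b*γ.J (m+1) (n+2) - 2*γ.Jy m (n+1)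
      + 4*c*γ.Jy m (n+3) + 2*b*γ.Jy (m+2) (n+1) = 0 := by
  have e : ∀ t : ℝ,
      2 * (γ.x t ^ (m+1) * γ.y t ^ n * deriv γ.x t)
        + 4*a * (γ.x t ^ (m+3) * γ.y t ^ n * deriv γ.x t)
        + 2*b * (γ.x t ^ (m+1) * γ.y t ^ (n+2) * deriv γ.x t)
        - 2 * (γ.x t ^ m * γ.y t ^ (n+1) * deriv γ.y t)
        + 4*c * (γ.x t ^ m * γ.y t ^ (n+3) * deriv γ.y t)
        + 2*b * (γ.x t ^ (m+2) * γ.y t ^ (n+1) * deriv γ.y t) = 0 := by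
    intro t
    linear_combination (γ.x t ^ m * γ.y t ^ n) * (γ.dH0 t)
  have i1 : IntervalIntegrable (fun t => 2 * (γ.x t ^ (m+1) * γ.y t ^ (n) * deriv γ.x t)) MeasureTheory.volume 0 γ.T :=
    (continuous_const.mul (γ.contJ (m+1) (n))).intervalIntegrable _ _
  have i2 : IntervalIntegrable (fun t => 4*a * (γ.x t ^ (m+3) * γ.y t ^ (n) * deriv γ.x t)) MeasureTheory.volume 0 γ.T :=
    (continuous_const.mul (γ.contJ (m+3) (n))).intervalIntegrable _ _
  have i3 : IntervalIntegrable (fun t => 2*b * (γ.x t ^ (m+1) * γ.y t ^ (n+2) * deriv γ.x t)) MeasureTheory.volume 0 γ.T :=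
    (continuous_const.mul (γ.contJ (m+1) (n+2))).intervalIntegrable _ _
  have i4 : IntervalIntegrable (fun t => 2 * (γ.x t ^ (m) * γ.y t ^ (n+1) * deriv γ.y t)) MeasureTheory.volume 0 γ.T :=
    (continuous_const.mul (γ.contJy (m) (n+1))).intervalIntegrable _ _
  have i5 : IntervalIntegrable (fun t => 4*c * (γ.x t ^ (m) * γ.y t ^ (n+3) * deriv γ.y t)) MeasureTheory.volume 0 γ.T :=
    (continuous_const.mul (γ.contJy (m) (n+3))).intervalIntegrable _ _
  have i6 : IntervalIntegrable (fun t => 2*b * (γ.x t ^ (m+2) * γ.y t ^ (n+1) * deriv γ.y t)) MeasureTheory.volume 0 γ.T :=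
    (continuous_const.mul (γ.contJy (m+2) (n+1))).intervalIntegrable _ _
  simp only [J, Jy]
  rw [← intervalIntegral.integral_const_mul, ← intervalIntegral.integral_const_mul,
    ← intervalIntegral.integral_const_mul, ← intervalIntegral.integral_const_mul,
    ← intervalIntegral.integral_const_mul, ← intervalIntegral.integral_const_mul,
    ← intervalIntegral.integral_add i1 i2, ← intervalIntegral.integral_add (i1.add i2) i3,
    ← intervalIntegral.integral_sub ((i1.add i2).add i3) i4,
    ← intervalIntegral.integral_add (((i1.add i2).add i3).sub i4) i5,
    ← intervalIntegral.integral_add ((((i1.add i2).add i3).sub i4).add i5) i6]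
  exact (intervalIntegral.integral_congr (g := fun _ => (0:ℝ)) (fun t _ => e t)).trans
    intervalIntegral.integral_zero

lemma relC (m n : ℕ) :
    γ.J (m+2) n - γ.J m (n+2) + a * γ.J (m+4) n + c * γ.J m (n+4)
      + b * γ.J (m+2) (n+2) = h * γ.J m n := by
  have e : ∀ t : ℝ,
      γ.x t ^ (m+2) * γ.y t ^ n * deriv γ.x t
        - γ.x t ^ m * γ.y t ^ (n+2) * deriv γ.x t
        + a * (γ.x t ^ (m+4) * γ.y t ^ n * deriv γ.x t)
        + c * (γ.x t ^ m * γ.y t ^ (n+4) * deriv γ.x t)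
        + b * (γ.x t ^ (m+2) * γ.y t ^ (n+2) * deriv γ.x t)
        = h * (γ.x t ^ m * γ.y t ^ n * deriv γ.x t) := by
    intro t
    have hl := γ.lev t
    unfold Hfun at hl
    linear_combination (γ.x t ^ m * γ.y t ^ n * deriv γ.x t) * hl
  have i1 := (γ.contJ (m+2) n).intervalIntegrable (μ := MeasureTheory.volume) 0 γ.T
  have i2 := (γ.contJ m (n+2)).intervalIntegrable (μ := MeasureTheory.volume) 0 γ.T
  have i3 : IntervalIntegrable (fun t => a * (γ.x t ^ (m+4) * γ.y t ^ (n) * deriv γ.x t)) MeasureTheory.volume 0 γ.T :=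
    (continuous_const.mul (γ.contJ (m+4) (n))).intervalIntegrable _ _
  have i4 : IntervalIntegrable (fun t => c * (γ.x t ^ (m) * γ.y t ^ (n+4) * deriv γ.x t)) MeasureTheory.volume 0 γ.T :=
    (continuous_const.mul (γ.contJ (m) (n+4))).intervalIntegrable _ _
  have i5 : IntervalIntegrable (fun t => b * (γ.x t ^ (m+2) * γ.y t ^ (n+2) * deriv γ.x t)) MeasureTheory.volume 0 γ.T :=
    (continuous_const.mul (γ.contJ (m+2) (n+2))).intervalIntegrable _ _
  simp only [J]
  rw [← intervalIntegral.integral_const_mul a, ← intervalIntegral.integral_const_mul c,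
    ← intervalIntegral.integral_const_mul b, ← intervalIntegral.integral_const_mul h,
    ← intervalIntegral.integral_sub i1 i2,
    ← intervalIntegral.integral_add (i1.sub i2) i3,
    ← intervalIntegral.integral_add ((i1.sub i2).add i3) i4,
    ← intervalIntegral.integral_add (((i1.sub i2).add i3).add i4) i5]
  exact intervalIntegral.integral_congr (fun t _ => e t)

noncomputable def K (i j : ℕ) : ℝ := γ.J (2*i+1) (2*j+1)

lemma KC (i j : ℕ) :
    γ.K (i+1) j - γ.K i (j+1) + a * γ.K (i+2) j + c * γ.K i (j+2)
      + b * γ.K (i+1) (j+1) = h * γ.K i j := by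
  have hC := γ.relC (2*i+1) (2*j+1)
  simp only [K]
  ring_nf at hC ⊢
  linear_combination hC

lemma KB0 (j : ℕ) :
    2*(2*(j:ℝ)+3) * γ.K 0 j + 4*a*(2*(j:ℝ)+3) * γ.K 1 j
      + 2*b*(2*(j:ℝ)+1) * γ.K 0 (j+1) = 0 := by
  have hB := γ.relB 0 (2*j+1)
  have hz1 := γ.jy0 (2*j+1)
  have hz2 := γ.jy0 (2*j+3)
  have hA := γ.relA 1 (2*j+2)
  simp only [K]
  push_cast at hB hz1 hz2 hA
  ring_nf at hB hz1 hz2 hA ⊢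
  linear_combination (2*(j:ℝ)+3)*hB + (2*(2*(j:ℝ)+3))*hz1 + (-4*c*(2*(j:ℝ)+3))*hz2 + (-2*b)*hA

lemma KBs (i j : ℕ) :
    2*(2*(j:ℝ)+3)*(2*(j:ℝ)+5) * γ.K (i+1) j
      + 4*a*(2*(j:ℝ)+3)*(2*(j:ℝ)+5) * γ.K (i+2) j
      + 2*b*((2*(j:ℝ)+3) - (2*(i:ℝ)+4))*(2*(j:ℝ)+5) * γ.K (i+1) (j+1)
      + 4*((i:ℝ)+1)*(2*(j:ℝ)+5) * γ.K i (j+1)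
      - 8*c*((i:ℝ)+1)*(2*(j:ℝ)+3) * γ.K i (j+2) = 0 := by
  have hB := γ.relB (2*i+2) (2*j+1)
  have hA1 := γ.relA (2*i+1) (2*j+2)
  have hA2 := γ.relA (2*i+1) (2*j+4)
  have hA3 := γ.relA (2*i+3) (2*j+2)
  simp only [K]
  push_cast at hB hA1 hA2 hA3
  ring_nf at hB hA1 hA2 hA3 ⊢
  linear_combination ((2*(j:ℝ)+3)*(2*(j:ℝ)+5))*hB + (2*(2*(j:ℝ)+5))*hA1
    + (-4*c*(2*(j:ℝ)+3))*hA2 + (-2*b*(2*(j:ℝ)+5))*hA3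

end Curve

noncomputable section
open Polynomial


def GoodW (a b c : ℝ) (d e : WithBot ℕ) (i j : ℕ) : Prop :=
  ∃ g1 g2 : Polynomial ℝ, g1.degree ≤ d ∧ g2.degree ≤ e ∧
    ∀ (h : ℝ) (γ : Curve a b c h),
      γ.K i j = g1.eval h * γ.K 0 0 + g2.eval h * γ.K 0 1

variable {a b c : ℝ} {d e d3 e3 : WithBot ℕ}

lemma goodW_mono {i j : ℕ} {d' e' : WithBot ℕ} (hg : GoodW a b c d e i j)
    (hd : d ≤ d') (he : e ≤ e') : GoodW a b c d' e' i j := by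
  obtain ⟨g1, g2, h1, h2, hv⟩ := hg
  exact ⟨g1, g2, h1.trans hd, h2.trans he, hv⟩

lemma good00 : GoodW a b c d e 0 0 ∨ True := Or.inr trivial

lemma goodW00 (hd : 0 ≤ d) : GoodW a b c d ⊥ 0 0 :=
  ⟨1, 0, by simpa [degree_one] using hd, by simp, fun h γ => by simp⟩

lemma goodW01 (he : 0 ≤ e) : GoodW a b c ⊥ e 0 1 :=
  ⟨0, 1, by simp, by simpa [degree_one] using he, fun h γ => by simp⟩

lemma goodW_comb2 {i j i1 j1 i2 j2 : ℕ} (s r1 r2 : ℝ) (hs : s ≠ 0)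
    (h1 : GoodW a b c d e i1 j1) (h2 : GoodW a b c d e i2 j2)
    (hrel : ∀ (h : ℝ) (γ : Curve a b c h),
      s * γ.K i j = r1 * γ.K i1 j1 + r2 * γ.K i2 j2) :
    GoodW a b c d e i j := by
  obtain ⟨p1, p2, hp1, hp2, hpv⟩ := h1
  obtain ⟨q1, q2, hq1, hq2, hqv⟩ := h2
  refine ⟨(r1/s) • p1 + (r2/s) • q1, (r1/s) • p2 + (r2/s) • q2, ?_, ?_, ?_⟩
  · exact (degree_add_le _ _).trans (max_le ((degree_smul_le _ _).trans hp1)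
      ((degree_smul_le _ _).trans hq1))
  · exact (degree_add_le _ _).trans (max_le ((degree_smul_le _ _).trans hp2)
      ((degree_smul_le _ _).trans hq2))
  · intro h γ
    have hr := hrel h γ
    rw [hpv h γ, hqv h γ] at hr
    simp only [eval_add, eval_smul, smul_eq_mul]
    field_simp at hr ⊢
    linear_combination hr

lemma goodW_comb4 {i j i1 j1 i2 j2 i3 j3 i4 j4 : ℕ} (s r1 r2 r3 r4 : ℝ) (hs : s ≠ 0)
    (h1 : GoodW a b c d e i1 j1) (h2 : GoodW a b c d e i2 j2)
    (h3 : GoodW a b c d e i3 j3) (h4 : GoodW a b c d e i4 j4)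
    (hrel : ∀ (h : ℝ) (γ : Curve a b c h),
      s * γ.K i j = r1 * γ.K i1 j1 + r2 * γ.K i2 j2 + r3 * γ.K i3 j3 + r4 * γ.K i4 j4) :
    GoodW a b c d e i j := by
  obtain ⟨p1, p2, hp1, hp2, hpv⟩ := h1
  obtain ⟨q1, q2, hq1, hq2, hqv⟩ := h2
  obtain ⟨u1, u2, hu1, hu2, huv⟩ := h3
  obtain ⟨v1, v2, hv1, hv2, hvv⟩ := h4
  refine ⟨(r1/s) • p1 + (r2/s) • q1 + (r3/s) • u1 + (r4/s) • v1,
          (r1/s) • p2 + (r2/s) • q2 + (r3/s) • u2 + (r4/s) • v2, ?_, ?_, ?_⟩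
  · refine (degree_add_le _ _).trans (max_le ((degree_add_le _ _).trans (max_le
      ((degree_add_le _ _).trans (max_le ((degree_smul_le _ _).trans hp1)
        ((degree_smul_le _ _).trans hq1))) ((degree_smul_le _ _).trans hu1)))
      ((degree_smul_le _ _).trans hv1))
  · refine (degree_add_le _ _).trans (max_le ((degree_add_le _ _).trans (max_le
      ((degree_add_le _ _).trans (max_le ((degree_smul_le _ _).trans hp2)
        ((degree_smul_le _ _).trans hq2))) ((degree_smul_le _ _).trans hu2)))
      ((degree_smul_le _ _).trans hv2))
  · intro h γ
    have hr := hrel h γ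
    rw [hpv h γ, hqv h γ, huv h γ, hvv h γ] at hr
    simp only [eval_add, eval_smul, smul_eq_mul]
    field_simp at hr ⊢
    linear_combination hr

lemma goodW_comb3h {i j i1 j1 i2 j2 i3 j3 : ℕ} (s r1 r2 r3 : ℝ) (hs : s ≠ 0)
    (h1 : GoodW a b c d e i1 j1) (h2 : GoodW a b c d e i2 j2)
    (h3 : GoodW a b c d3 e3 i3 j3) (hd3 : d3 + 1 ≤ d) (he3 : e3 + 1 ≤ e)
    (hrel : ∀ (h : ℝ) (γ : Curve a b c h),
      s * γ.K i j = r1 * γ.K i1 j1 + r2 * γ.K i2 j2 + r3 * (h * γ.K i3 j3)) :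
    GoodW a b c d e i j := by
  obtain ⟨p1, p2, hp1, hp2, hpv⟩ := h1
  obtain ⟨q1, q2, hq1, hq2, hqv⟩ := h2
  obtain ⟨u1, u2, hu1, hu2, huv⟩ := h3
  have hX1 : (X * u1).degree ≤ d := by
    refine (degree_mul_le _ _).trans ?_
    calc (X : ℝ[X]).degree + u1.degree ≤ 1 + d3 := add_le_add degree_X_le hu1
    _ = d3 + 1 := by rw [add_comm]
    _ ≤ d := hd3
  have hX2 : (X * u2).degree ≤ e := by
    refine (degree_mul_le _ _).trans ?_
    calc (X : ℝ[X]).degree + u2.degree ≤ 1 + e3 := add_le_add degree_X_le hu2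
    _ = e3 + 1 := by rw [add_comm]
    _ ≤ e := he3
  refine ⟨(r1/s) • p1 + (r2/s) • q1 + (r3/s) • (X * u1),
          (r1/s) • p2 + (r2/s) • q2 + (r3/s) • (X * u2), ?_, ?_, ?_⟩
  · exact (degree_add_le _ _).trans (max_le ((degree_add_le _ _).trans (max_le
      ((degree_smul_le _ _).trans hp1) ((degree_smul_le _ _).trans hq1)))
      ((degree_smul_le _ _).trans hX1))
  · exact (degree_add_le _ _).trans (max_le ((degree_add_le _ _).trans (max_le
      ((degree_smul_le _ _).trans hp2) ((degree_smul_le _ _).trans hq2)))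
      ((degree_smul_le _ _).trans hX2))
  · intro h γ
    have hr := hrel h γ
    rw [hpv h γ, hqv h γ, huv h γ] at hr
    simp only [eval_add, eval_smul, eval_mul, eval_X, smul_eq_mul]
    field_simp at hr ⊢
    linear_combination hr



lemma build (ha : a ≠ 0) (hD : b^2 - 4*a*c ≠ 0) :
    ∀ L i j, i + j = L → GoodW a b c ((L/2 : ℕ) : WithBot ℕ) (((L-1)/2 : ℕ) : WithBot ℕ) i j := by
  intro L
  induction L using Nat.strong_induction_on with
  | _ L IH =>
  match L with
  | 0 =>
    intro i j hij
    obtain ⟨rfl, rfl⟩ : i = 0 ∧ j = 0 := by omega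
    exact goodW_mono (goodW00 le_rfl) le_rfl bot_le
  | 1 =>
    intro i j hij
    have hone : ((1:ℕ)/2 : ℕ) = 0 := by norm_num
    rcases (by omega : (i = 0 ∧ j = 1) ∨ (i = 1 ∧ j = 0)) with ⟨rfl, rfl⟩ | ⟨rfl, rfl⟩
    · exact goodW_mono (goodW01 le_rfl) bot_le le_rfl
    · refine goodW_comb2 (12*a) (-6) (-2*b) (by simp [ha]) (goodW_mono (goodW00 le_rfl) le_rfl bot_le)
        (goodW_mono (goodW01 le_rfl) bot_le le_rfl) ?_
      intro h γ
      have hB := γ.KB0 0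
      push_cast at hB
      linear_combination hB
  | (s+2) =>
    intro i j hij
    -- level s+1 facts
    have hlev1 : ∀ i' j', i' + j' = s + 1 →
        GoodW a b c (((s+2)/2 : ℕ) : WithBot ℕ) (((s+1)/2 : ℕ) : WithBot ℕ) i' j' := by
      intro i' j' hij'
      refine goodW_mono (IH (s+1) (by omega) i' j' hij') ?_ ?_
      · exact_mod_cast Nat.div_le_div_right (by omega)
      · exact_mod_cast Nat.div_le_div_right (by omega)
    -- the h-multiplied level-s fact
    obtain ⟨d3, e3, hK0s, hd3, he3⟩ :
        ∃ d3 e3, GoodW a b c d3 e3 0 s ∧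
          d3 + 1 ≤ (((s+2)/2 : ℕ) : WithBot ℕ) ∧ e3 + 1 ≤ (((s+1)/2 : ℕ) : WithBot ℕ) := by
      match s with
      | 0 =>
        refine ⟨0, ⊥, goodW00 le_rfl, ?_, ?_⟩
        · exact_mod_cast (by norm_num : (0:ℕ) + 1 ≤ 2/2)
        · simp
      | (s'+1) =>
        refine ⟨(((s'+1)/2 : ℕ) : WithBot ℕ), ((s'/2 : ℕ) : WithBot ℕ),
          IH (s'+1) (by omega) 0 (s'+1) (by omega), ?_, ?_⟩
        · exact_mod_cast (by omega : (s'+1)/2 + 1 ≤ (s'+1+2)/2)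
        · exact_mod_cast (by omega : s'/2 + 1 ≤ (s'+1+1)/2)
    have hSne : (2*(s:ℝ)+3) ≠ 0 := by positivity
    have hSne5 : (2*(s:ℝ)+5) ≠ 0 := by positivity
    have hSne7 : (2*(s:ℝ)+7) ≠ 0 := by positivity
    have hDne : 4*a*c - b^2 ≠ 0 := fun hcon => hD (by linarith)
    -- u0 : K 0 (s+2)
    have u0 : GoodW a b c (((s+2)/2 : ℕ) : WithBot ℕ) (((s+1)/2 : ℕ) : WithBot ℕ) 0 (s+2) := by
      refine goodW_comb3h (2*(2*(s:ℝ)+3)*(2*(s:ℝ)+7)*(4*a*c-b^2))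
        (2*(2*(s:ℝ)+5)*(8*a*((s:ℝ)+2)+b*(2*(s:ℝ)+7))) (-4*a*(2*(s:ℝ)+3)*(2*(s:ℝ)+5))
        (8*a*(2*(s:ℝ)+3)*(2*(s:ℝ)+5))
        (by exact mul_ne_zero (mul_ne_zero (mul_ne_zero two_ne_zero hSne) hSne7) hDne)
        (hlev1 0 (s+1) (by omega)) (hlev1 1 s (by omega)) hK0s hd3 he3 ?_
      intro h γ
      have E1 := γ.KB0 (s+1)
      have E2 := γ.KBs 0 s
      have E3 := γ.KC 0 s
      push_cast at E1 E2 E3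
      ring_nf at E1 E2 E3 ⊢
      linear_combination (-(b*(2*(s:ℝ)+7)))*E1 + (-2*a)*E2 + (8*a*(2*(s:ℝ)+3)*(2*(s:ℝ)+5))*E3
    -- u1 : K 1 (s+1)
    have u1 : GoodW a b c (((s+2)/2 : ℕ) : WithBot ℕ) (((s+1)/2 : ℕ) : WithBot ℕ) 1 (s+1) := by
      refine goodW_comb2 (4*a*(2*(s:ℝ)+5)) (-2*(2*(s:ℝ)+5)) (-2*b*(2*(s:ℝ)+3))
        (by exact mul_ne_zero (mul_ne_zero (by norm_num) ha) hSne5)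
        (hlev1 0 (s+1) (by omega)) u0 ?_
      intro h γ
      have E1 := γ.KB0 (s+1)
      push_cast at E1
      ring_nf at E1 ⊢
      linear_combination E1
    -- inner sweep
    have inner : ∀ m j0, m + j0 = s + 2 →
        GoodW a b c (((s+2)/2 : ℕ) : WithBot ℕ) (((s+1)/2 : ℕ) : WithBot ℕ) m j0 := by
      intro m
      induction m using Nat.strong_induction_on with
      | _ m IHm =>
      match m, IHm with
      | 0, _ =>
        intro j0 hj0
        obtain rfl : j0 = s + 2 := by omega
        exact u0
      | 1, _ =>
        intro j0 hj0
        obtain rfl : j0 = s + 1 := by omega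
        exact u1
      | (k+2), IHm =>
        intro j0 hj0
        have hj3 : (2*(j0:ℝ)+3) ≠ 0 := by positivity
        have hj5 : (2*(j0:ℝ)+5) ≠ 0 := by positivity
        refine goodW_comb4 (4*a*(2*(j0:ℝ)+3)*(2*(j0:ℝ)+5))
          (-2*(2*(j0:ℝ)+3)*(2*(j0:ℝ)+5)) (-2*b*((2*(j0:ℝ)+3) - (2*(k:ℝ)+4))*(2*(j0:ℝ)+5))
          (-4*((k:ℝ)+1)*(2*(j0:ℝ)+5)) (8*c*((k:ℝ)+1)*(2*(j0:ℝ)+3))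
          (by exact mul_ne_zero (mul_ne_zero (mul_ne_zero (by norm_num) ha) hj3) hj5)
          (hlev1 (k+1) j0 (by omega)) (IHm (k+1) (by omega) (j0+1) (by omega))
          (hlev1 k (j0+1) (by omega)) (IHm k (by omega) (j0+2) (by omega)) ?_
        intro h γ
        have EB := γ.KBs k j0
        ring_nf at EB ⊢
        linear_combination EB
    exact inner i j hij

end

theorem stmt5 (a b c : ℝ) (habc : a * c * (b ^ 2 - 4 * a * c) ≠ 0)
    (p q : ℕ) (hpq : 2 ≤ p + q) :
    ∃ g1 g2 : Polynomial ℝ,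
      g1.degree ≤ ((((2 * p + 1) + (2 * q + 1) - 2) / 4 : ℕ) : WithBot ℕ) ∧
      g2.degree < ((((2 * p + 1) + (2 * q + 1)) / 4 : ℕ) : WithBot ℕ) ∧
      ∀ (h : ℝ) (x y : ℝ → ℝ) (T : ℝ), 0 < T →
        ContDiff ℝ 1 x → ContDiff ℝ 1 y →
        (∀ t : ℝ, x (t + T) = x t ∧ y (t + T) = y t) →
        (∀ t : ℝ, Hfun a b c (x t) (y t) = h) →
        lineInt x y T (2 * p + 1) (2 * q + 1) =
          g1.eval h * lineInt x y T 1 1 + g2.eval h * lineInt x y T 1 3 := by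
  have ha : a ≠ 0 := by
    intro h0
    exact habc (by rw [h0]; ring)
  have hD : b ^ 2 - 4 * a * c ≠ 0 := by
    intro h0
    exact habc (by rw [h0]; ring)
  obtain ⟨g1, g2, hg1, hg2, hval⟩ := build ha hD (p+q) p q rfl
  refine ⟨g1, g2, ?_, ?_, ?_⟩
  · refine hg1.trans ?_
    exact_mod_cast le_of_eq (by omega : (p+q)/2 = ((2*p+1)+(2*q+1)-2)/4)
  · refine lt_of_le_of_lt hg2 ?_
    exact_mod_cast (by omega : (p+q-1)/2 < ((2*p+1)+(2*q+1))/4)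
  · intro h x y T hT hx hy hper hlev
    exact hval h ⟨x, y, T, hT, hx, hy, hper, hlev⟩
end
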